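/- arXiv:0902.4373 — 4 statements merged into one kernel-verified Lean document; each statement's English description precedes it below -/
import Mathlib

section
/- Let f ∈ L²(0,1) and g = Proj_K(f) its L²-projection onto the cone K of nondecreasing functions. Then Ω_f ⊆ Ω_g, where Ω_u denotes the open subset of (0,1) where u is locally essentially constant. Consequently H_g ⊆ H_f. -/
open MeasureTheory Set Filter

noncomputable section

/-- Lebesgue measure restricted to the interval (0,1). -/
def μ01 : MeasureTheory.Measure ℝ := MeasureTheory.volume.restrict (Set.Ioo 0 1)

/-- The convex cone `K` of (essentially) nondecreasing functions in L²(0,1). -/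
def coneK : Set (ℝ → ℝ) := {g | MonotoneOn g (Set.Ioo 0 1) ∧ MeasureTheory.MemLp g 2 μ01}

/-- `g` is the L²(0,1)-orthogonal projection of `f` onto the cone `K`,
characterized by the variational inequality `⟨f - g, z - g⟩ ≤ 0` for all `z ∈ K`. -/
def IsProjK (f g : ℝ → ℝ) : Prop :=
  g ∈ coneK ∧ ∀ z ∈ coneK, (∫ w in Set.Ioo (0:ℝ) 1, (f w - g w) * (z w - g w)) ≤ 0

/-- The convex envelope of `F` on `[0,1]`: the supremum of affine functions below `F` there. -/
def convEnv (F : ℝ → ℝ) (w : ℝ) : ℝ :=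
  sSup {y | ∃ a b : ℝ, y = a + b * w ∧ ∀ v ∈ Set.Icc (0:ℝ) 1, a + b * v ≤ F v}

/-- The open set `Ω_g ⊆ (0,1)` of points near which `g` is essentially constant. -/
def locConstSet (g : ℝ → ℝ) : Set ℝ :=
  {w | w ∈ Set.Ioo (0:ℝ) 1 ∧ ∃ a b c : ℝ, a < w ∧ w < b ∧
    ∀ᵐ x ∂μ01, x ∈ Set.Ioo a b → g x = c}

/-- The closed subspace `H_g` of L²(0,1) functions essentially constant on each
open interval contained in `Ω_g`. -/
def Hspace (g : ℝ → ℝ) : Set (ℝ → ℝ) :=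
  {u | MeasureTheory.MemLp u 2 μ01 ∧ ∀ a b : ℝ, Set.Ioo a b ⊆ locConstSet g →
    ∃ c : ℝ, ∀ᵐ x ∂μ01, x ∈ Set.Ioo a b → u x = c}

/-- `ξ` belongs to the subdifferential `∂I_K(g)` of the indicator function of `K` at `g ∈ K`. -/
def subdiffIK (g ξ : ℝ → ℝ) : Prop :=
  g ∈ coneK ∧ ∀ z ∈ coneK, (∫ w in Set.Ioo (0:ℝ) 1, ξ w * (z w - g w)) ≤ 0

/-! ### Auxiliary lemmas -/

instance : IsFiniteMeasure μ01 :=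
  ⟨by rw [μ01, Measure.restrict_apply_univ, Real.volume_Ioo]; exact ENNReal.ofReal_lt_top⟩

private lemma add_max_sub (s t : ℝ) : s + max (t - s) 0 = max s t := by
  rcases le_total s t with h | h
  · rw [max_eq_left (by linarith : (0:ℝ) ≤ t - s), max_eq_right h]; ring
  · rw [max_eq_right (by linarith : t - s ≤ (0:ℝ)), max_eq_left h]; ring

private lemma sub_max_sub (s t : ℝ) : s - max (s - t) 0 = min s t := by
  rcases le_total s t with h | h
  · rw [max_eq_right (by linarith : s - t ≤ (0:ℝ)), min_eq_left h]; ring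
  · rw [max_eq_left (by linarith : (0:ℝ) ≤ s - t), min_eq_right h]; ring

private lemma l2mul {ν : Measure ℝ} {φ ψ : ℝ → ℝ} (h1 : MemLp φ 2 ν) (h2 : MemLp ψ 2 ν) :
    Integrable (fun x => φ x * ψ x) ν := by
  have h := h2.smul (φ := φ) h1 (p := 2) (q := 2) (r := 1) (hpqr := ⟨by rw [inv_one, ENNReal.inv_two_add_inv_two]⟩)
  have h' := memLp_one_iff_integrable.mp h
  exact h'

private lemma memLpMax0 {ν : Measure ℝ} {φ : ℝ → ℝ} (h : MemLp φ 2 ν) :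
    MemLp (fun x => max (φ x) 0) 2 ν := by
  refine h.of_le ((h.aestronglyMeasurable.aemeasurable.max aemeasurable_const).aestronglyMeasurable)
    (ae_of_all _ fun x => ?_)
  rcases le_total (φ x) 0 with hx | hx
  · rw [max_eq_right hx]; simpa using abs_nonneg _
  · rw [max_eq_left hx]

private lemma memLp_restrict {g : ℝ → ℝ} (hL2 : MemLp g 2 μ01) {p q : ℝ}
    (hsub : Set.Ioo p q ⊆ Set.Ioo (0:ℝ) 1) : MemLp g 2 (volume.restrict (Set.Ioo p q)) :=
  hL2.mono_measure (by rw [μ01] at *; exact Measure.restrict_mono hsub le_rfl)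

private instance finRestrict (p q : ℝ) : IsFiniteMeasure (volume.restrict (Set.Ioo p q)) :=
  ⟨by rw [Measure.restrict_apply_univ, Real.volume_Ioo]; exact ENNReal.ofReal_lt_top⟩

private lemma intOnA {g : ℝ → ℝ} (hL2 : MemLp g 2 μ01) {p q : ℝ}
    (hsub : Set.Ioo p q ⊆ Set.Ioo (0:ℝ) 1) (c β : ℝ) :
    IntegrableOn (fun x => (c - g x) * max (β - g x) 0) (Set.Ioo p q) volume := by
  have hgν := memLp_restrict hL2 hsub
  exact l2mul ((memLp_const c).sub hgν) (memLpMax0 ((memLp_const β).sub hgν))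

private lemma intOnB {g : ℝ → ℝ} (hL2 : MemLp g 2 μ01) {p q : ℝ}
    (hsub : Set.Ioo p q ⊆ Set.Ioo (0:ℝ) 1) (c β : ℝ) :
    IntegrableOn (fun x => (c - g x) * max (g x - β) 0) (Set.Ioo p q) volume := by
  have hgν := memLp_restrict hL2 hsub
  exact l2mul ((memLp_const c).sub hgν) (memLpMax0 (hgν.sub (memLp_const β)))

/-- Positivity of the integral of a function bounded below by `k > 0` on a subinterval. -/
private lemma posI {φ : ℝ → ℝ} {p q s t k : ℝ} (hst : s < t)
    (hsub : Set.Ioo s t ⊆ Set.Ioo p q) (hk : 0 < k)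
    (hint : IntegrableOn φ (Set.Ioo p q) volume)
    (h0 : ∀ x ∈ Set.Ioo p q, 0 ≤ φ x) (hks : ∀ x ∈ Set.Ioo s t, k ≤ φ x) :
    0 < ∫ x in Set.Ioo p q, φ x := by
  have h1 : (∫ x in Set.Ioo s t, φ x) ≤ ∫ x in Set.Ioo p q, φ x :=
    setIntegral_mono_set hint ((ae_restrict_iff' measurableSet_Ioo).2 (ae_of_all _ h0))
      (HasSubset.Subset.eventuallyLE hsub)
  have h2 : k * (volume (Set.Ioo s t)).toReal ≤ ∫ x in Set.Ioo s t, φ x :=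
    setIntegral_ge_of_const_le_real measurableSet_Ioo
      (by rw [Real.volume_Ioo]; exact ENNReal.ofReal_ne_top) hks (hint.mono_set hsub)
  have h3 : (volume (Set.Ioo s t)).toReal = t - s := by
    rw [Real.volume_Ioo, ENNReal.toReal_ofReal (by linarith)]
  rw [h3] at h2
  nlinarith

/-- Variational inequality for the localized "push-up" perturbation. -/
private lemma lemA {f g : ℝ → ℝ} (hg : IsProjK f g) {p q β : ℝ} (hp : 0 < p) (hpq : p < q)
    (hq : q < 1) (hβ : β ≤ g q) :
    (∫ x in Set.Ioo p q, (f x - g x) * max (β - g x) 0) ≤ 0 := by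
  obtain ⟨⟨hmono, hL2⟩, hvar⟩ := hg
  set h : ℝ → ℝ := (Set.Ioo p q).indicator (fun y => max (β - g y) 0) with hh
  have hq01 : q ∈ Set.Ioo (0:ℝ) 1 := ⟨hp.trans hpq, hq⟩
  have hsub : Set.Ioo p q ⊆ Set.Ioo (0:ℝ) 1 := fun x hx => ⟨hp.trans hx.1, hx.2.trans hq⟩
  have hmax : MemLp (fun y => max (β - g y) 0) 2 μ01 := memLpMax0 ((memLp_const β).sub hL2)
  have hzK : (fun x => g x + h x) ∈ coneK := by
    constructor
    · intro x hx y hy hxy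
      have hgxy := hmono hx hy hxy
      by_cases hx' : x ∈ Set.Ioo p q
      · by_cases hy' : y ∈ Set.Ioo p q
        · simp only [hh, indicator_of_mem hx', indicator_of_mem hy', add_max_sub]
          exact max_le_max hgxy le_rfl
        · have hqy : q ≤ y := by
            by_contra hc; push_neg at hc; exact hy' ⟨hx'.1.trans_le hxy, hc⟩
          simp only [hh, indicator_of_mem hx', indicator_of_notMem hy', add_zero, add_max_sub]
          exact max_le hgxy (hβ.trans (hmono hq01 hy hqy))
      · by_cases hy' : y ∈ Set.Ioo p q
        · simp only [hh, indicator_of_notMem hx', indicator_of_mem hy', add_zero, add_max_sub]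
          exact hgxy.trans (le_max_left _ _)
        · simp only [hh, indicator_of_notMem hx', indicator_of_notMem hy', add_zero]
          exact hgxy
    · exact hL2.add (hmax.indicator measurableSet_Ioo)
  have hv := hvar _ hzK
  simp only [add_sub_cancel_left] at hv
  have e1 : ∀ w : ℝ, (f w - g w) * h w
      = (Set.Ioo p q).indicator (fun y => (f y - g y) * max (β - g y) 0) w := by
    intro w
    by_cases hw : w ∈ Set.Ioo p q <;> simp [hh, hw]
  calc (∫ x in Set.Ioo p q, (f x - g x) * max (β - g x) 0)
      = ∫ w in Set.Ioo (0:ℝ) 1 ∩ Set.Ioo p q,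
          (f w - g w) * max (β - g w) 0 := by
        rw [Set.inter_eq_self_of_subset_right hsub]
    _ = ∫ w in Set.Ioo (0:ℝ) 1,
          (Set.Ioo p q).indicator (fun y => (f y - g y) * max (β - g y) 0) w :=
        (setIntegral_indicator measurableSet_Ioo).symm
    _ = ∫ w in Set.Ioo (0:ℝ) 1, (f w - g w) * h w := by simp_rw [e1]
    _ ≤ 0 := hv

/-- Variational inequality for the localized "push-down" perturbation. -/
private lemma lemB {f g : ℝ → ℝ} (hg : IsProjK f g) {p q β : ℝ} (hp : 0 < p) (hpq : p < q)
    (hq : q < 1) (hβ : g p ≤ β) :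
    0 ≤ ∫ x in Set.Ioo p q, (f x - g x) * max (g x - β) 0 := by
  obtain ⟨⟨hmono, hL2⟩, hvar⟩ := hg
  set h : ℝ → ℝ := (Set.Ioo p q).indicator (fun y => max (g y - β) 0) with hh
  have hp01 : p ∈ Set.Ioo (0:ℝ) 1 := ⟨hp, hpq.trans hq⟩
  have hsub : Set.Ioo p q ⊆ Set.Ioo (0:ℝ) 1 := fun x hx => ⟨hp.trans hx.1, hx.2.trans hq⟩
  have hmax : MemLp (fun y => max (g y - β) 0) 2 μ01 := memLpMax0 (hL2.sub (memLp_const β))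
  have hzK : (fun x => g x - h x) ∈ coneK := by
    constructor
    · intro x hx y hy hxy
      have hgxy := hmono hx hy hxy
      by_cases hx' : x ∈ Set.Ioo p q
      · by_cases hy' : y ∈ Set.Ioo p q
        · simp only [hh, indicator_of_mem hx', indicator_of_mem hy', sub_max_sub]
          exact min_le_min hgxy le_rfl
        · simp only [hh, indicator_of_mem hx', indicator_of_notMem hy', sub_zero, sub_max_sub]
          exact (min_le_left _ _).trans hgxy
      · by_cases hy' : y ∈ Set.Ioo p q
        · have hxp : x ≤ p := by
            by_contra hc; push_neg at hc
            exact hx' ⟨hc, lt_of_le_of_lt hxy hy'.2⟩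
          simp only [hh, indicator_of_notMem hx', indicator_of_mem hy', sub_zero, sub_max_sub]
          exact le_min hgxy ((hmono hx hp01 hxp).trans hβ)
        · simp only [hh, indicator_of_notMem hx', indicator_of_notMem hy', sub_zero]
          exact hgxy
    · exact hL2.sub (hmax.indicator measurableSet_Ioo)
  have hv := hvar _ hzK
  have e0 : ∀ w : ℝ, (f w - g w) * ((g w - h w) - g w) = -((f w - g w) * h w) := by
    intro w; ring
  simp only [e0] at hv
  rw [integral_neg] at hv
  have hv' : 0 ≤ ∫ w in Set.Ioo (0:ℝ) 1, (f w - g w) * h w := by linarith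
  have e1 : ∀ w : ℝ, (f w - g w) * h w
      = (Set.Ioo p q).indicator (fun y => (f y - g y) * max (g y - β) 0) w := by
    intro w
    by_cases hw : w ∈ Set.Ioo p q <;> simp [hh, hw]
  calc (0:ℝ) ≤ ∫ w in Set.Ioo (0:ℝ) 1, (f w - g w) * h w := hv'
    _ = ∫ w in Set.Ioo (0:ℝ) 1,
          (Set.Ioo p q).indicator (fun y => (f y - g y) * max (g y - β) 0) w := by simp_rw [e1]
    _ = ∫ w in Set.Ioo (0:ℝ) 1 ∩ Set.Ioo p q, (f w - g w) * max (g w - β) 0 :=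
        setIntegral_indicator measurableSet_Ioo
    _ = ∫ x in Set.Ioo p q, (f x - g x) * max (g x - β) 0 := by
        rw [Set.inter_eq_self_of_subset_right hsub]

/-- Replacing `f` by its constant value in the integrand. -/
private lemma congrC {f g : ℝ → ℝ} {a' b' c : ℝ}
    (hconst : ∀ᵐ x ∂μ01, x ∈ Set.Ioo a' b' → f x = c) {p q : ℝ} (m : ℝ → ℝ)
    (hsub1 : Set.Ioo p q ⊆ Set.Ioo a' b') (hsub2 : Set.Ioo p q ⊆ Set.Ioo (0:ℝ) 1) :
    (∫ x in Set.Ioo p q, (f x - g x) * m x) = ∫ x in Set.Ioo p q, (c - g x) * m x := by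
  refine integral_congr_ae ?_
  have h1 : ∀ᵐ x ∂(volume.restrict (Set.Ioo p q)), x ∈ Set.Ioo a' b' → f x = c :=
    ae_restrict_of_ae_restrict_of_subset hsub2 hconst
  filter_upwards [h1, ae_restrict_mem measurableSet_Ioo] with x hx1 hx2
  rw [hx1 (hsub1 hx2)]

set_option maxHeartbeats 2000000 in
theorem stmt12 (f g : ℝ → ℝ) (hf : MeasureTheory.MemLp f 2 μ01)
    (hg : IsProjK f g) :
    locConstSet f ⊆ locConstSet g ∧ Hspace g ⊆ Hspace f := by
  have hmono := hg.1.1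
  have hL2 := hg.1.2
  have main : locConstSet f ⊆ locConstSet g := by
    intro w hw
    obtain ⟨hw01, a, b, c, haw, hwb, hconst0⟩ := hw
    set a' := (max a 0 + w) / 2 with ha'def
    set b' := (w + min b 1) / 2 with hb'def
    have hma : max a 0 < w := max_lt haw hw01.1
    have hmb : w < min b 1 := lt_min hwb hw01.2
    have ha'0 : 0 < a' := by
      have : (0:ℝ) ≤ max a 0 := le_max_right _ _
      rw [ha'def]; linarith [hw01.1]
    have ha'w : a' < w := by rw [ha'def]; linarith
    have hwb' : w < b' := by rw [hb'def]; linarith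
    have hb'1 : b' < 1 := by
      have : min b 1 ≤ 1 := min_le_right _ _
      rw [hb'def]; linarith [hw01.2]
    have ha'b' : a' < b' := ha'w.trans hwb'
    have hsubab : Set.Ioo a' b' ⊆ Set.Ioo a b := by
      intro x hx
      constructor
      · calc a ≤ max a 0 := le_max_left _ _
          _ < a' := by rw [ha'def]; linarith
          _ < x := hx.1
      · calc x < b' := hx.2
          _ < min b 1 := by rw [hb'def]; linarith
          _ ≤ b := min_le_left _ _
    have hconst : ∀ᵐ x ∂μ01, x ∈ Set.Ioo a' b' → f x = c := by
      filter_upwards [hconst0] with x hx hx'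
      exact hx (hsubab hx')
    have hsub01 : Set.Ioo a' b' ⊆ Set.Ioo (0:ℝ) 1 :=
      fun x hx => ⟨ha'0.trans hx.1, hx.2.trans hb'1⟩
    have ha'01 : a' ∈ Set.Ioo (0:ℝ) 1 := ⟨ha'0, ha'b'.trans hb'1⟩
    have hb'01 : b' ∈ Set.Ioo (0:ℝ) 1 := ⟨ha'0.trans ha'b', hb'1⟩
    by_contra hng
    -- strict increase across w
    have hstrict : ∀ u ∈ Set.Ico a' w, ∀ v ∈ Set.Ioc w b', g u < g v := by
      intro u hu v hv
      by_contra hc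
      push_neg at hc
      have hu01 : u ∈ Set.Ioo (0:ℝ) 1 := ⟨ha'0.trans_le hu.1, (hu.2.trans hwb').trans hb'1⟩
      have hv01 : v ∈ Set.Ioo (0:ℝ) 1 := ⟨ha'0.trans (ha'w.trans hv.1), hv.2.trans_lt hb'1⟩
      refine hng ⟨hw01, u, v, g u, hu.2, hv.1, ae_of_all _ fun x hx => ?_⟩
      have hx01 : x ∈ Set.Ioo (0:ℝ) 1 := ⟨hu01.1.trans hx.1, hx.2.trans hv01.2⟩
      exact le_antisymm ((hmono hx01 hv01 hx.2.le).trans hc) (hmono hu01 hx01 hx.1.le)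
    set α := g w with hα
    have hLR : (∀ u ∈ Set.Ioo a' w, g u < α) ∨ (∀ v ∈ Set.Ioo w b', α < g v) := by
      by_contra hcon
      push_neg at hcon
      obtain ⟨⟨u, hu, hu2⟩, ⟨v, hv, hv2⟩⟩ := hcon
      have := hstrict u ⟨hu.1.le, hu.2⟩ v ⟨hv.1, hv.2.le⟩
      linarith
    set p := (a' + w) / 2 with hpdef
    set q := (w + b') / 2 with hqdef
    have hpw : p ∈ Set.Ioo a' w := ⟨by rw [hpdef]; linarith, by rw [hpdef]; linarith⟩
    have hqw : q ∈ Set.Ioo w b' := ⟨by rw [hqdef]; linarith, by rw [hqdef]; linarith⟩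
    have hp0 : 0 < p := ha'0.trans hpw.1
    have hq1 : q < 1 := hqw.2.trans hb'1
    have hpq : p < q := hpw.2.trans hqw.1
    have hp01 : p ∈ Set.Ioo (0:ℝ) 1 := ⟨hp0, hpq.trans hq1⟩
    have hq01 : q ∈ Set.Ioo (0:ℝ) 1 := ⟨hp0.trans hpq, hq1⟩
    have hsubpq1 : Set.Ioo p q ⊆ Set.Ioo a' b' :=
      fun x hx => ⟨hpw.1.trans hx.1, hx.2.trans hqw.2⟩
    have hsubpq0 : Set.Ioo p q ⊆ Set.Ioo (0:ℝ) 1 := hsubpq1.trans hsub01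
    rcases hLR with hL | hR
    · -- Left case: g u < α for all u ∈ (a', w)
      -- Claim 1: c < α
      have hcα : c < α := by
        by_contra hc
        push_neg at hc  -- α ≤ c
        have hgb' : α ≤ g b' := hmono hw01 hb'01 hwb'.le
        have hI := lemA ⟨⟨hmono, hL2⟩, hg.2⟩ ha'0 ha'b' hb'1 hgb'
        rw [congrC hconst (fun x => max (α - g x) 0) (fun _ hx => hx) hsub01] at hI
        have hgu : g p < α := hL p hpw
        have hpos : 0 < ∫ x in Set.Ioo a' b', (c - g x) * max (α - g x) 0 := by
          refine posI hpw.1 (fun x hx => ⟨hx.1, hx.2.trans (hpw.2.trans hwb')⟩)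
            (by nlinarith : 0 < (α - g p) ^ 2) (intOnA hL2 hsub01 c α) ?_ ?_
          · intro x hx
            rcases le_total (α - g x) 0 with h | h
            · rw [max_eq_right h, mul_zero]
            · rw [max_eq_left h]
              nlinarith
          · intro x hx
            have hx01 : x ∈ Set.Ioo (0:ℝ) 1 := ⟨ha'0.trans hx.1, (hx.2.trans hpw.2).trans hw01.2⟩
            have hgx : g x ≤ g p := hmono hx01 hp01 hx.2.le
            rw [max_eq_left (by linarith)]
            nlinarith
        linarith
      -- Claim 2: contradiction
      set β := max c (g p) with hβdef
      have hβα : β < α := max_lt hcα (hL p hpw)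
      have hcβ : c ≤ β := le_max_left _ _
      have hI := lemB ⟨⟨hmono, hL2⟩, hg.2⟩ hp0 hpq hq1 (le_max_right c (g p))
      rw [congrC hconst (fun x => max (g x - β) 0) hsubpq1 hsubpq0] at hI
      have hpos : 0 < ∫ x in Set.Ioo p q, -((c - g x) * max (g x - β) 0) := by
        refine posI hqw.1 (fun x hx => ⟨hpw.2.trans hx.1, hx.2⟩)
          (mul_pos (by linarith : (0:ℝ) < α - c) (by linarith : (0:ℝ) < α - β))
          ((intOnB hL2 hsubpq0 c β).neg) ?_ ?_
        · intro x hx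
          rcases le_total (g x - β) 0 with h | h
          · rw [max_eq_right h, mul_zero, neg_zero]
          · rw [max_eq_left h]
            nlinarith
        · intro x hx
          have hx01 : x ∈ Set.Ioo (0:ℝ) 1 := ⟨hw01.1.trans hx.1, (hx.2.trans hqw.2).trans hb'1⟩
          have hgx : α ≤ g x := hmono hw01 hx01 hx.1.le
          rw [max_eq_left (by linarith)]
          nlinarith [mul_nonneg (by linarith : (0:ℝ) ≤ g x - α) (by linarith : (0:ℝ) ≤ α - β),
            mul_nonneg (by linarith : (0:ℝ) ≤ g x - α) (by linarith : (0:ℝ) ≤ g x - β)]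
      rw [integral_neg] at hpos
      linarith
    · -- Right case: α < g v for all v ∈ (w, b')
      -- Claim 1': α < c
      have hcα : α < c := by
        by_contra hc
        push_neg at hc  -- c ≤ α
        have hga' : g a' ≤ α := hmono ha'01 hw01 ha'w.le
        have hI := lemB ⟨⟨hmono, hL2⟩, hg.2⟩ ha'0 ha'b' hb'1 hga'
        rw [congrC hconst (fun x => max (g x - α) 0) (fun _ hx => hx) hsub01] at hI
        have hgv : α < g q := hR q hqw
        have hpos : 0 < ∫ x in Set.Ioo a' b', -((c - g x) * max (g x - α) 0) := by
          refine posI hqw.2 (fun x hx => ⟨(ha'w.trans hqw.1).trans hx.1, hx.2⟩)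
            (by nlinarith : 0 < (g q - α) ^ 2) ((intOnB hL2 hsub01 c α).neg) ?_ ?_
          · intro x hx
            rcases le_total (g x - α) 0 with h | h
            · rw [max_eq_right h, mul_zero, neg_zero]
            · rw [max_eq_left h]
              nlinarith
          · intro x hx
            have hx01 : x ∈ Set.Ioo (0:ℝ) 1 := ⟨(hw01.1.trans hqw.1).trans hx.1, hx.2.trans hb'1⟩
            have hgx : g q ≤ g x := hmono hq01 hx01 hx.1.le
            rw [max_eq_left (by linarith)]
            nlinarith [mul_nonneg (by linarith : (0:ℝ) ≤ g x - g q) (by linarith : (0:ℝ) ≤ g q - α),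
              mul_nonneg (by linarith : (0:ℝ) ≤ g x - g q) (by linarith : (0:ℝ) ≤ g x - α)]
        rw [integral_neg] at hpos
        linarith
      -- Claim 2': contradiction
      set β := min c (g q) with hβdef
      have hβα : α < β := lt_min hcα (hR q hqw)
      have hβc : β ≤ c := min_le_left _ _
      have hI := lemA ⟨⟨hmono, hL2⟩, hg.2⟩ hp0 hpq hq1 (min_le_right c (g q))
      rw [congrC hconst (fun x => max (β - g x) 0) hsubpq1 hsubpq0] at hI
      have hpos : 0 < ∫ x in Set.Ioo p q, (c - g x) * max (β - g x) 0 := by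
        refine posI hpw.2 (fun x hx => ⟨hx.1, hx.2.trans hqw.1⟩)
          (by nlinarith : 0 < (β - α) ^ 2) (intOnA hL2 hsubpq0 c β) ?_ ?_
        · intro x hx
          rcases le_total (β - g x) 0 with h | h
          · rw [max_eq_right h, mul_zero]
          · rw [max_eq_left h]
            nlinarith
        · intro x hx
          have hx01 : x ∈ Set.Ioo (0:ℝ) 1 := ⟨hp0.trans hx.1, hx.2.trans hw01.2⟩
          have hgx : g x ≤ α := hmono hx01 hw01 hx.2.le
          rw [max_eq_left (by linarith)]
          nlinarith [mul_nonneg (by linarith : (0:ℝ) ≤ α - g x) (by linarith : (0:ℝ) ≤ β - α),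
            mul_nonneg (by linarith : (0:ℝ) ≤ α - g x) (by linarith : (0:ℝ) ≤ β - g x)]
      linarith
  refine ⟨main, ?_⟩
  intro u hu
  exact ⟨hu.1, fun a b hab => hu.2 a b (fun x hx => main (hab hx))⟩

end
end

section
/- For X ∈ K (a nondecreasing function in L²(0,1)) and Y ∈ L²(0,1), Y is essentially constant on each open interval where X is essentially constant if and only if Y = y ∘ X almost everywhere for some Borel map y ∈ L²_ρ(ℝ), where ρ = X_#λ is the pushforward of Lebesgue measure on (0,1) under X. -/
open MeasureTheory Set Filter

noncomputable section

/-- A function agreeing with a measurable function off a countable set is measurable. -/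
lemma measurable_off_countable {f g : ℝ → ℝ} {N : Set ℝ} (hN : N.Countable)
    (hg : Measurable g) (h : ∀ t ∉ N, f t = g t) : Measurable f := by
  intro B hB
  have key : f ⁻¹' B = (g ⁻¹' B \ N) ∪ (f ⁻¹' B ∩ N) := by
    ext t
    by_cases ht : t ∈ N
    · simp [ht]
    · simp [ht, h t ht]
  rw [key]
  exact ((hg hB).diff hN.measurableSet).union
    ((hN.mono inter_subset_right).measurableSet)

theorem stmt14 (X Y : ℝ → ℝ) (hX : X ∈ coneK) (hXm : Measurable X)
    (hY : MeasureTheory.MemLp Y 2 μ01) :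
    (∀ a b : ℝ, Set.Ioo a b ⊆ Set.Ioo (0:ℝ) 1 →
      (∃ c : ℝ, ∀ᵐ w ∂μ01, w ∈ Set.Ioo a b → X w = c) →
      ∃ c : ℝ, ∀ᵐ w ∂μ01, w ∈ Set.Ioo a b → Y w = c) ↔
    ∃ y : ℝ → ℝ, Measurable y ∧
      MeasureTheory.MemLp y 2 (MeasureTheory.Measure.map X μ01) ∧
      ∀ᵐ w ∂μ01, Y w = y (X w) := by
  classical
  constructor
  · intro h0
    have hXmono : MonotoneOn X (Set.Ioo 0 1) := hX.1
    -- measurable representative of Y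
    set Y' : ℝ → ℝ := hY.1.mk Y with hY'def
    have hY'm : Measurable Y' := hY.1.stronglyMeasurable_mk.measurable
    have hYY' : Y =ᵐ[μ01] Y' := hY.1.ae_eq_mk
    -- generalized inverses
    set p : ℝ → ℝ := fun t => sInf ({w | w ∈ Set.Ioo (0:ℝ) 1 ∧ t ≤ X w} ∪ {1}) with hpdef
    set q : ℝ → ℝ := fun t => sSup ({w | w ∈ Set.Ioo (0:ℝ) 1 ∧ X w ≤ t} ∪ {0}) with hqdef
    have hbddB : ∀ t, BddBelow ({w | w ∈ Set.Ioo (0:ℝ) 1 ∧ t ≤ X w} ∪ {1}) := by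
      intro t
      refine ⟨0, ?_⟩
      rintro x (hx | hx)
      · exact hx.1.1.le
      · simp only [Set.mem_singleton_iff] at hx; simp [hx]
    have hbddA : ∀ t, BddAbove ({w | w ∈ Set.Ioo (0:ℝ) 1 ∧ X w ≤ t} ∪ {0}) := by
      intro t
      refine ⟨1, ?_⟩
      rintro x (hx | hx)
      · exact hx.1.2.le
      · simp only [Set.mem_singleton_iff] at hx; simp [hx]
    have hneB : ∀ t, ({w | w ∈ Set.Ioo (0:ℝ) 1 ∧ t ≤ X w} ∪ {1}).Nonempty :=
      fun t => ⟨1, Or.inr rfl⟩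
    have hneA : ∀ t, ({w | w ∈ Set.Ioo (0:ℝ) 1 ∧ X w ≤ t} ∪ {0}).Nonempty :=
      fun t => ⟨0, Or.inr rfl⟩
    have hple : ∀ w ∈ Set.Ioo (0:ℝ) 1, p (X w) ≤ w :=
      fun w hw => csInf_le (hbddB _) (Or.inl ⟨hw, le_rfl⟩)
    have hqge : ∀ w ∈ Set.Ioo (0:ℝ) 1, w ≤ q (X w) :=
      fun w hw => le_csSup (hbddA _) (Or.inl ⟨hw, le_rfl⟩)
    have hp0 : ∀ t, 0 ≤ p t := by
      intro t
      apply le_csInf (hneB t)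
      rintro x (hx | hx)
      · exact hx.1.1.le
      · simp only [Set.mem_singleton_iff] at hx; simp [hx]
    have hq1 : ∀ t, q t ≤ 1 := by
      intro t
      apply csSup_le (hneA t)
      rintro x (hx | hx)
      · exact hx.1.2.le
      · simp only [Set.mem_singleton_iff] at hx; simp [hx]
    have hpmono : Monotone p := by
      intro t t' htt'
      apply csInf_le_csInf (hbddB t) (hneB t')
      rintro x (hx | hx)
      · exact Or.inl ⟨hx.1, htt'.trans hx.2⟩
      · exact Or.inr hx
    have hqmono : Monotone q := by
      intro t t' htt'
      apply csSup_le_csSup (hbddA t') (hneA t)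
      rintro x (hx | hx)
      · exact Or.inl ⟨hx.1, hx.2.trans htt'⟩
      · exact Or.inr hx
    -- on the open interval (p t, q t), X is identically t
    have hflat : ∀ t u, p t < u → u < q t → u ∈ Set.Ioo (0:ℝ) 1 ∧ X u = t := by
      intro t u h1 h2
      have hu : u ∈ Set.Ioo (0:ℝ) 1 :=
        ⟨lt_of_le_of_lt (hp0 t) h1, lt_of_lt_of_le h2 (hq1 t)⟩
      refine ⟨hu, le_antisymm ?_ ?_⟩
      · -- X u ≤ t : some v > u with X v ≤ t
        obtain ⟨v, hv, huv⟩ := exists_lt_of_lt_csSup (hneA t) h2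
        rcases hv with hv | hv
        · exact le_trans (hXmono hu hv.1 huv.le) hv.2
        · simp only [Set.mem_singleton_iff] at hv
          exact absurd (hv ▸ huv) (not_lt.mpr hu.1.le)
      · -- t ≤ X u : some v < u with t ≤ X v
        obtain ⟨v, hv, hvu⟩ := exists_lt_of_csInf_lt (hneB t) h1
        rcases hv with hv | hv
        · exact le_trans hv.2 (hXmono hv.1 hu hvu.le)
        · simp only [Set.mem_singleton_iff] at hv
          exact absurd (hv ▸ hvu) (not_lt.mpr hu.2.le)
    -- choose the essential constants of Y on the flat intervals
    have H : ∀ t : ℝ, ∃ cc : ℝ, p t < q t →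
        ∀ᵐ w ∂μ01, w ∈ Set.Ioo (p t) (q t) → Y w = cc := by
      intro t
      by_cases h : p t < q t
      · obtain ⟨cc, hcc⟩ := h0 (p t) (q t)
          (fun u hu => (hflat t u hu.1 hu.2).1)
          ⟨t, Filter.Eventually.of_forall fun u hu => (hflat t u hu.1 hu.2).2⟩
        exact ⟨cc, fun _ => hcc⟩
      · exact ⟨0, fun h' => absurd h' h⟩
    choose c hc using H
    set N : Set ℝ := {t | p t < q t} with hNdef
    have hNc : N.Countable := by
      refine (Set.countable_range fun r : ℚ => X r).mono ?_
      intro t ht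
      obtain ⟨r, hr1, hr2⟩ := exists_rat_btwn (show p t < q t from ht)
      exact ⟨r, (hflat t r hr1 hr2).2⟩
    set y : ℝ → ℝ := fun t => if p t < q t then c t else Y' ((p t + q t) / 2) with hydef
    have hmeas : Measurable y := by
      apply measurable_off_countable hNc
        (hY'm.comp ((hpmono.measurable.add hqmono.measurable).div_const 2))
      intro t ht
      simp only [hydef, Function.comp_apply, Pi.add_apply, if_neg (show ¬ p t < q t from ht)]
    -- the bad countable set of endpoints
    set E : Set ℝ := (p '' N) ∪ (q '' N) with hEdef
    have hEc : E.Countable := (hNc.image p).union (hNc.image q)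
    have hE0 : μ01 E = 0 := by
      have h1 : μ01 E = MeasureTheory.volume (E ∩ Set.Ioo 0 1) := by
        rw [μ01, MeasureTheory.Measure.restrict_apply hEc.measurableSet]
      rw [h1]
      exact le_antisymm
        (le_trans (measure_mono Set.inter_subset_left)
          ((hEc.measure_zero MeasureTheory.volume).le)) zero_le
    have hEae : ∀ᵐ w ∂μ01, w ∉ E := measure_eq_zero_iff_ae_notMem.mp hE0
    have hc_all : ∀ᵐ w ∂μ01, ∀ t ∈ N, w ∈ Set.Ioo (p t) (q t) → Y w = c t :=
      (MeasureTheory.ae_ball_iff hNc).mpr fun t ht => hc t ht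
    have hmem : ∀ᵐ w ∂μ01, w ∈ Set.Ioo (0:ℝ) 1 := by
      rw [μ01]
      exact MeasureTheory.ae_restrict_mem measurableSet_Ioo
    have hae : ∀ᵐ w ∂μ01, Y w = y (X w) := by
      filter_upwards [hmem, hEae, hc_all, hYY'] with w hw hwE hcw hYw
      by_cases h : p (X w) < q (X w)
      · have htN : X w ∈ N := h
        have hpw : p (X w) < w := by
          rcases lt_or_eq_of_le (hple w hw) with h' | h'
          · exact h'
          · exact absurd (Or.inl ⟨X w, htN, h'⟩) hwE
        have hqw : w < q (X w) := by
          rcases lt_or_eq_of_le (hqge w hw) with h' | h'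
          · exact h'
          · exact absurd (Or.inr ⟨X w, htN, h'.symm⟩) hwE
        have := hcw (X w) htN ⟨hpw, hqw⟩
        simp only [hydef, if_pos h]
        exact this
      · have hpe : p (X w) = w :=
          le_antisymm (hple w hw) (le_trans (hqge w hw) (not_lt.mp h))
        have hqe : q (X w) = w :=
          le_antisymm (le_trans (not_lt.mp h) (hple w hw)) (hqge w hw)
        simp only [hydef, if_neg h, hpe, hqe]
        rw [show (w + w) / 2 = w by ring]
        exact hYw
    refine ⟨y, hmeas, ?_, hae⟩
    rw [MeasureTheory.memLp_map_measure_iff hmeas.aestronglyMeasurable hXm.aemeasurable]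
    exact (MeasureTheory.memLp_congr_ae
      (hae.mono fun w h => h.symm)).mpr hY
  · rintro ⟨y, _, _, hae⟩ a b hsub ⟨cX, hcX⟩
    refine ⟨y cX, ?_⟩
    filter_upwards [hae, hcX] with w h1 h2 hw
    rw [h1, h2 hw]
end
end

section
/- Let X¹, X² solve the sticky-particle Lagrangian flow X^ℓ(t) = Proj_K(X^ℓ₀ + t V^ℓ₀) in L²(0,1), with initial data X^ℓ₀ ∈ K ∩ L^p(0,1) and V^ℓ₀ ∈ L^p(0,1), 1 ≤ p ≤ ∞. Then for every t ≥ 0: ‖X¹(t) - X²(t)‖_{L^p(0,1)} ≤ ‖X¹₀ - X²₀‖_{L^p(0,1)} + t ‖V¹₀ - V²₀‖_{L^p(0,1)}. -/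
open MeasureTheory Set Filter

noncomputable section

instance : MeasureTheory.IsFiniteMeasure μ01 := by
  constructor
  rw [show μ01 = MeasureTheory.volume.restrict (Set.Ioo 0 1) from rfl,
    MeasureTheory.Measure.restrict_apply_univ]
  simp

lemma lip1 {φ : ℝ → ℝ} (h : ∀ x y, |φ x - φ y| ≤ |x - y|) : LipschitzWith 1 φ :=
  LipschitzWith.of_dist_le_mul fun x y => by
    rw [NNReal.coe_one, one_mul, Real.dist_eq, Real.dist_eq]; exact h x y

lemma lip1_apply {φ : ℝ → ℝ} (h : LipschitzWith 1 φ) (x y : ℝ) : φ x - φ y ≤ |x - y| := by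
  have h2 := h.dist_le_mul x y
  rw [NNReal.coe_one, one_mul, Real.dist_eq, Real.dist_eq] at h2
  exact (le_abs_self _).trans h2

lemma coneK_perturb {a b : ℝ → ℝ} (ha : a ∈ coneK) (hb : b ∈ coneK)
    {φ : ℝ → ℝ} (hmono : Monotone φ) (hlip : LipschitzWith 1 φ) {C : ℝ}
    (hbd : ∀ x, |φ x| ≤ C) :
    (fun w => a w + φ (b w - a w)) ∈ coneK := by
  constructor
  · intro w hw w' hw' hle
    have haw : a w ≤ a w' := ha.1 hw hw' hle
    have hbw : b w ≤ b w' := hb.1 hw hw' hle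
    have h1 : φ (b w - a w) ≤ φ (b w' - a w) := hmono (by linarith)
    have h2 : φ (b w' - a w) - φ (b w' - a w') ≤ |(b w' - a w) - (b w' - a w')| :=
      lip1_apply hlip _ _
    rw [show (b w' - a w) - (b w' - a w') = a w' - a w by ring, abs_of_nonneg (by linarith)] at h2
    simp only
    linarith
  · have haesm : MeasureTheory.AEStronglyMeasurable (fun w => φ (b w - a w)) μ01 :=
      hlip.continuous.comp_aestronglyMeasurable
        (hb.2.aestronglyMeasurable.sub ha.2.aestronglyMeasurable)
    have : MeasureTheory.MemLp (fun w => φ (b w - a w)) 2 μ01 :=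
      MeasureTheory.MemLp.of_bound haesm C
        (by filter_upwards with w; simpa [Real.norm_eq_abs] using hbd (b w - a w))
    exact ha.2.add this

lemma key_ineq {f₁ g₁ f₂ g₂ : ℝ → ℝ} (h₁ : IsProjK f₁ g₁) (h₂ : IsProjK f₂ g₂)
    (hf₁ : MeasureTheory.MemLp f₁ 2 μ01) (hf₂ : MeasureTheory.MemLp f₂ 2 μ01)
    {θ : ℝ → ℝ} (hmono : Monotone θ) (hlip : LipschitzWith 1 θ)
    (hbd : ∀ x, |θ x| ≤ 1) :
    ∫ w, ((g₁ w - g₂ w) - (f₁ w - f₂ w)) * θ (g₁ w - g₂ w) ∂μ01 ≤ 0 := by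
  have hg₁ := h₁.1.2
  have hg₂ := h₂.1.2
  have hASu : MeasureTheory.AEStronglyMeasurable (fun w => θ (g₁ w - g₂ w)) μ01 :=
    hlip.continuous.comp_aestronglyMeasurable
      (hg₁.aestronglyMeasurable.sub hg₂.aestronglyMeasurable)
  -- second variational inequality
  have hz₂ : (fun w => g₂ w + θ (g₁ w - g₂ w)) ∈ coneK :=
    coneK_perturb h₂.1 h₁.1 hmono hlip hbd
  have VI₂ : ∫ w, (f₂ w - g₂ w) * ((g₂ w + θ (g₁ w - g₂ w)) - g₂ w) ∂μ01 ≤ 0 := h₂.2 _ hz₂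
  simp only [add_sub_cancel_left] at VI₂
  -- first variational inequality
  set φ : ℝ → ℝ := fun x => -θ (-x) with hφ
  have hφmono : Monotone φ := fun x y hxy => by
    simp only [hφ, neg_le_neg_iff]; exact hmono (neg_le_neg hxy)
  have hφlip : LipschitzWith 1 φ := lip1 fun x y => by
    have := lip1_apply hlip (-y) (-x)
    have h2 := lip1_apply hlip (-x) (-y)
    simp only [hφ]
    rw [abs_le]
    constructor
    · have : θ (-x) - θ (-y) ≤ |(-x) - (-y)| := lip1_apply hlip _ _
      rw [show (-x) - (-y) = -(x - y) by ring, abs_neg] at this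
      linarith
    · have : θ (-y) - θ (-x) ≤ |(-y) - (-x)| := lip1_apply hlip _ _
      rw [show (-y) - (-x) = x - y by ring] at this
      linarith
  have hφbd : ∀ x, |φ x| ≤ 1 := fun x => by simp only [hφ, abs_neg]; exact hbd _
  have hz₁ : (fun w => g₁ w + φ (g₂ w - g₁ w)) ∈ coneK :=
    coneK_perturb h₁.1 h₂.1 hφmono hφlip hφbd
  have VI₁ : ∫ w, (f₁ w - g₁ w) * ((g₁ w + φ (g₂ w - g₁ w)) - g₁ w) ∂μ01 ≤ 0 := h₁.2 _ hz₁
  simp only [add_sub_cancel_left] at VI₁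
  have hφval : ∀ w, φ (g₂ w - g₁ w) = -θ (g₁ w - g₂ w) := fun w => by
    simp only [hφ, neg_sub]
  simp only [hφval] at VI₁
  -- integrability
  have hint₂ : MeasureTheory.Integrable (fun w => θ (g₁ w - g₂ w) * (f₂ w - g₂ w)) μ01 :=
    MeasureTheory.Integrable.bdd_mul ((hf₂.sub hg₂).integrable one_le_two) hASu
      (Filter.Eventually.of_forall fun w => by simpa [Real.norm_eq_abs] using hbd (g₁ w - g₂ w))
  have hint₁ : MeasureTheory.Integrable (fun w => (-θ (g₁ w - g₂ w)) * (f₁ w - g₁ w)) μ01 :=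
    MeasureTheory.Integrable.bdd_mul ((hf₁.sub hg₁).integrable one_le_two) hASu.neg
      (Filter.Eventually.of_forall fun w => by simpa [Real.norm_eq_abs] using hbd (g₁ w - g₂ w))
  have hsplit : (fun w => ((g₁ w - g₂ w) - (f₁ w - f₂ w)) * θ (g₁ w - g₂ w))
      = fun w => θ (g₁ w - g₂ w) * (f₂ w - g₂ w) + (-θ (g₁ w - g₂ w)) * (f₁ w - g₁ w) := by
    funext w; ring
  rw [hsplit, MeasureTheory.integral_add hint₂ hint₁]
  have VI₂' : ∫ w, θ (g₁ w - g₂ w) * (f₂ w - g₂ w) ∂μ01 ≤ 0 := by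
    rw [show (fun w => θ (g₁ w - g₂ w) * (f₂ w - g₂ w))
      = fun w => (f₂ w - g₂ w) * θ (g₁ w - g₂ w) from funext fun w => mul_comm _ _]
    exact VI₂
  have VI₁' : ∫ w, (-θ (g₁ w - g₂ w)) * (f₁ w - g₁ w) ∂μ01 ≤ 0 := by
    rw [show (fun w => (-θ (g₁ w - g₂ w)) * (f₁ w - g₁ w))
      = fun w => (f₁ w - g₁ w) * (-θ (g₁ w - g₂ w)) from funext fun w => mul_comm _ _]
    exact VI₁
  linarith

lemma int_max {h : ℝ → ℝ} (hh : MeasureTheory.Integrable h μ01) (hmeas : Measurable h)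
    (c : ℝ) (hc : 0 ≤ c) :
    MeasureTheory.Integrable (fun w => max (h w - c) 0) μ01 := by
  refine MeasureTheory.Integrable.mono' (hh.abs.add (MeasureTheory.integrable_const c))
    (((hmeas.sub measurable_const).max measurable_const).aestronglyMeasurable) ?_
  filter_upwards with w
  rw [Real.norm_eq_abs, abs_of_nonneg (le_max_right _ _)]
  show max (h w - c) 0 ≤ |h w| + c
  have h1 : h w - c ≤ |h w| + c := by
    have := le_abs_self (h w); linarith
  exact max_le h1 (by linarith [abs_nonneg (h w)])

lemma pos_part_ineq {u v : ℝ → ℝ} (hum : Measurable u) (hvm : Measurable v)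
    (hu : MeasureTheory.Integrable u μ01) (hv : MeasureTheory.Integrable v μ01)
    (key : ∀ θ : ℝ → ℝ, Monotone θ → LipschitzWith 1 θ → (∀ x, |θ x| ≤ 1) →
      ∫ w, (u w - v w) * θ (u w) ∂μ01 ≤ 0)
    {c : ℝ} (hc : 0 ≤ c) :
    ∫ w, max (u w - c) 0 ∂μ01 ≤ ∫ w, max (v w - c) 0 ∂μ01 := by
  set ind : ℝ → ℝ := fun x => if c < x then (1:ℝ) else 0 with hind
  have hindm : Measurable ind := by
    apply Measurable.ite (measurableSet_lt measurable_const measurable_id) <;> measurability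
  have hind01 : ∀ x, 0 ≤ ind x ∧ ind x ≤ 1 := fun x => by
    simp only [hind]; split <;> norm_num
  -- Step A : ∫ (u - v) * ind (u) ≤ 0 by dominated convergence
  have hA : ∫ w, (u w - v w) * ind (u w) ∂μ01 ≤ 0 := by
    set θn : ℕ → ℝ → ℝ := fun n x => min (max (x - c) 0) (1/(n+1)) with hθn
    have hθnonneg : ∀ n x, 0 ≤ θn n x := fun n x =>
      le_min (le_max_right _ _) (by positivity)
    have hθle : ∀ n x, θn n x ≤ 1/(n+1) := fun n x => min_le_right _ _
    have hmsub : Monotone (fun x : ℝ => x - c) := fun x y hxy => by simpa using sub_le_sub_right hxy c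
    have hθmono : ∀ n, Monotone (θn n) := fun n =>
      (hmsub.max monotone_const).min monotone_const
    have hθlip : ∀ n, LipschitzWith 1 (θn n) := fun n => lip1 fun x y => by
      have h1 : |min (max (x - c) 0) (1/(n+1)) - min (max (y - c) 0) (1/(n+1))|
          ≤ max |max (x-c) 0 - max (y-c) 0| |(1/(n+1) : ℝ) - 1/(n+1)| :=
        abs_min_sub_min_le_max _ _ _ _
      have h2 : |max (x-c) 0 - max (y-c) 0| ≤ |(x - c) - (y - c)| :=
        abs_max_sub_max_le_abs _ _ _
      rw [show (x - c) - (y - c) = x - y by ring] at h2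
      simp only [sub_self, abs_zero] at h1
      calc |θn n x - θn n y| ≤ max |max (x-c) 0 - max (y-c) 0| 0 := h1
        _ ≤ |x - y| := max_le h2 (abs_nonneg _)
    have hθbd : ∀ n x, |θn n x| ≤ 1 := fun n x => by
      rw [abs_of_nonneg (hθnonneg n x)]
      calc θn n x ≤ 1/(n+1) := hθle n x
        _ ≤ 1 := by rw [div_le_one (by positivity)]; linarith [Nat.cast_nonneg (α := ℝ) n]
    have hFle : ∀ n : ℕ, ∫ w, (u w - v w) * (((n:ℝ)+1) * θn n (u w)) ∂μ01 ≤ 0 := by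
      intro n
      have h0 := key (θn n) (hθmono n) (hθlip n) (hθbd n)
      rw [show (fun w => (u w - v w) * (((n:ℝ)+1) * θn n (u w)))
        = fun w => ((n:ℝ)+1) * ((u w - v w) * θn n (u w)) from funext fun w => by ring]
      rw [MeasureTheory.integral_const_mul]
      exact mul_nonpos_of_nonneg_of_nonpos (by positivity) h0
    have hθcont : ∀ n, Continuous (θn n) := fun n => (hθlip n).continuous
    have hDCT : Tendsto (fun n : ℕ => ∫ w, (u w - v w) * (((n:ℝ)+1) * θn n (u w)) ∂μ01)
        atTop (nhds (∫ w, (u w - v w) * ind (u w) ∂μ01)) := by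
      apply MeasureTheory.tendsto_integral_of_dominated_convergence
        (fun w => |u w - v w|)
      · intro n
        exact ((hum.sub hvm).mul
          (measurable_const.mul ((hθcont n).measurable.comp hum))).aestronglyMeasurable
      · exact (hu.sub hv).abs
      · intro n
        filter_upwards with w
        rw [Real.norm_eq_abs, abs_mul]
        have hb : |((n:ℝ)+1) * θn n (u w)| ≤ 1 := by
          rw [abs_mul, abs_of_nonneg (by positivity : (0:ℝ) ≤ (n:ℝ)+1),
            abs_of_nonneg (hθnonneg n _)]
          calc ((n:ℝ)+1) * θn n (u w) ≤ ((n:ℝ)+1) * (1/((n:ℝ)+1)) := by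
                have := hθle n (u w); nlinarith [Nat.cast_nonneg (α := ℝ) n]
            _ = 1 := by field_simp
        calc |u w - v w| * |((n:ℝ)+1) * θn n (u w)| ≤ |u w - v w| * 1 := by
              exact mul_le_mul_of_nonneg_left hb (abs_nonneg _)
          _ = |u w - v w| := mul_one _
      · filter_upwards with w
        by_cases h : c < u w
        · have hind1 : ind (u w) = 1 := by simp [hind, h]
          rw [hind1]
          obtain ⟨N, hN⟩ := exists_nat_one_div_lt (sub_pos.2 h)
          apply Tendsto.congr' (f₁ := fun _ : ℕ => (u w - v w) * 1)
          · rw [Filter.eventuallyEq_iff_exists_mem]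
            refine ⟨Set.Ici N, mem_atTop N, fun n hn => ?_⟩
            have hle : (1:ℝ)/((n:ℝ)+1) ≤ 1/((N:ℝ)+1) := by
              apply one_div_le_one_div_of_le (by positivity)
              have : (N:ℝ) ≤ (n:ℝ) := Nat.cast_le.2 hn
              linarith
            have hθval : θn n (u w) = 1/((n:ℝ)+1) := by
              apply min_eq_right
              calc (1:ℝ)/((n:ℝ)+1) ≤ 1/((N:ℝ)+1) := hle
                _ ≤ u w - c := le_of_lt hN
                _ ≤ max (u w - c) 0 := le_max_left _ _
            simp only [hθval]
            field_simp
          · exact tendsto_const_nhds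
        · have hθ0 : ∀ n, θn n (u w) = 0 := fun n => by
            have : max (u w - c) 0 = 0 := max_eq_right (by push_neg at h; linarith)
            rw [hθn]; simp only [this]
            exact min_eq_left (by positivity)
          have hind0 : ind (u w) = 0 := by simp [hind, h]
          simp only [hθ0, hind0, mul_zero]
          exact tendsto_const_nhds
    exact le_of_tendsto hDCT (Filter.Eventually.of_forall hFle)
  -- Step B
  have hmeq : (fun w => max (u w - c) 0) = fun w => (u w - c) * ind (u w) := by
    funext w
    by_cases h : c < u w
    · simp [hind, h, max_eq_left (by linarith : (0:ℝ) ≤ u w - c)]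
    · push_neg at h
      simp [hind, not_lt.2 h, max_eq_right (by linarith : u w - c ≤ 0)]
  have hindum : Measurable (fun w => ind (u w)) := hindm.comp hum
  have int3 : MeasureTheory.Integrable (fun w => (u w - v w) * ind (u w)) μ01 := by
    refine MeasureTheory.Integrable.mono' (hu.sub hv).abs
      (((hum.sub hvm).mul hindum).aestronglyMeasurable) ?_
    filter_upwards with w
    rw [Real.norm_eq_abs, abs_mul]
    calc |u w - v w| * |ind (u w)| ≤ |u w - v w| * 1 :=
          mul_le_mul_of_nonneg_left (abs_le.2 ⟨by linarith [(hind01 (u w)).1], (hind01 (u w)).2⟩)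
            (abs_nonneg _)
      _ = |u w - v w| := mul_one _
  have int2 : MeasureTheory.Integrable (fun w => (v w - c) * ind (u w)) μ01 := by
    refine MeasureTheory.Integrable.mono' (hv.abs.add (MeasureTheory.integrable_const c))
      (((hvm.sub measurable_const).mul hindum).aestronglyMeasurable) ?_
    filter_upwards with w
    rw [Real.norm_eq_abs, abs_mul]
    calc |v w - c| * |ind (u w)| ≤ |v w - c| * 1 :=
          mul_le_mul_of_nonneg_left (abs_le.2 ⟨by linarith [(hind01 (u w)).1], (hind01 (u w)).2⟩)
            (abs_nonneg _)
      _ = |v w - c| := mul_one _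
      _ ≤ |v w| + c := by
          have := abs_sub_abs_le_abs_sub (v w) (c:ℝ)
          have h2 := abs_sub (v w) (c:ℝ)
          calc |v w - c| ≤ |v w| + |c| := abs_sub _ _
            _ = |v w| + c := by rw [abs_of_nonneg hc]
  have intmaxv : MeasureTheory.Integrable (fun w => max (v w - c) 0) μ01 := int_max hv hvm c hc
  rw [hmeq, show (fun w => (u w - c) * ind (u w))
    = fun w => (u w - v w) * ind (u w) + (v w - c) * ind (u w) from funext fun w => by ring,
    MeasureTheory.integral_add int3 int2]
  have h2 : ∫ w, (v w - c) * ind (u w) ∂μ01 ≤ ∫ w, max (v w - c) 0 ∂μ01 := by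
    apply MeasureTheory.integral_mono int2 intmaxv
    intro w
    by_cases h : c < u w
    · simp only [hind, if_pos h, mul_one]; exact le_max_left _ _
    · simp only [hind, if_neg h, mul_zero]; exact le_max_right _ _
  linarith

lemma abs_part_ineq {u v : ℝ → ℝ} (hum : Measurable u) (hvm : Measurable v)
    (hu : MeasureTheory.Integrable u μ01) (hv : MeasureTheory.Integrable v μ01)
    (key : ∀ θ : ℝ → ℝ, Monotone θ → LipschitzWith 1 θ → (∀ x, |θ x| ≤ 1) →
      ∫ w, (u w - v w) * θ (u w) ∂μ01 ≤ 0)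
    {c : ℝ} (hc : 0 ≤ c) :
    ∫ w, max (|u w| - c) 0 ∂μ01 ≤ ∫ w, max (|v w| - c) 0 ∂μ01 := by
  have hpos := pos_part_ineq hum hvm hu hv key hc
  have keyneg : ∀ θ : ℝ → ℝ, Monotone θ → LipschitzWith 1 θ → (∀ x, |θ x| ≤ 1) →
      ∫ w, ((-u w) - (-v w)) * θ (-u w) ∂μ01 ≤ 0 := by
    intro θ hm hl hb
    have hm' : Monotone (fun x : ℝ => -θ (-x)) := fun x y hxy => by
      simp only [neg_le_neg_iff]; exact hm (neg_le_neg hxy)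
    have hl' : LipschitzWith 1 (fun x : ℝ => -θ (-x)) := lip1 fun x y => by
      rw [abs_le]
      constructor
      · have := lip1_apply hl (-x) (-y)
        rw [show (-x) - (-y) = -(x-y) by ring, abs_neg] at this
        linarith
      · have := lip1_apply hl (-y) (-x)
        rw [show (-y) - (-x) = x - y by ring] at this
        linarith
    have hb' : ∀ x, |(fun x : ℝ => -θ (-x)) x| ≤ 1 := fun x => by
      simp only [abs_neg]; exact hb _
    have h0 := key _ hm' hl' hb'
    have heq : (fun w => (u w - v w) * (-θ (-u w)))
        = fun w => ((-u w) - (-v w)) * θ (-u w) := by funext w; ring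
    rw [heq] at h0
    exact h0
  have hneg := pos_part_ineq hum.neg hvm.neg hu.neg hv.neg keyneg hc
  have hsplit : ∀ x : ℝ, max (|x| - c) 0 = max (x - c) 0 + max (-x - c) 0 := by
    intro x
    rcases le_or_gt 0 x with hx | hx
    · rw [abs_of_nonneg hx, max_eq_right (by linarith : -x - c ≤ 0), add_zero]
    · rw [abs_of_neg hx, max_eq_right (by linarith : x - c ≤ 0), zero_add]
  have hiu : MeasureTheory.Integrable (fun w => max (u w - c) 0) μ01 := int_max hu hum c hc
  have hiun : MeasureTheory.Integrable (fun w => max (-u w - c) 0) μ01 :=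
    int_max hu.neg hum.neg c hc
  have hiv : MeasureTheory.Integrable (fun w => max (v w - c) 0) μ01 := int_max hv hvm c hc
  have hivn : MeasureTheory.Integrable (fun w => max (-v w - c) 0) μ01 :=
    int_max hv.neg hvm.neg c hc
  rw [show (fun w => max (|u w| - c) 0) = fun w => max (u w - c) 0 + max (-u w - c) 0 from
      funext fun w => hsplit (u w),
    show (fun w => max (|v w| - c) 0) = fun w => max (v w - c) 0 + max (-v w - c) 0 from
      funext fun w => hsplit (v w),
    MeasureTheory.integral_add hiu hiun, MeasureTheory.integral_add hiv hivn]
  exact add_le_add hpos hneg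

lemma layer_pt {q : ℝ} (hq : 1 < q) (a : ℝ) :
    (‖a‖₊ : ENNReal) ^ q
      = ENNReal.ofReal (q*(q-1)) *
        ∫⁻ s in Set.Ioi (0:ℝ), ENNReal.ofReal (s ^ (q-2) * max (|a| - s) 0) := by
  have hq0 : (0:ℝ) < q := by linarith
  rcases eq_or_lt_of_le (abs_nonneg a) with hA | hA
  · have ha0 : a = 0 := abs_eq_zero.1 hA.symm
    subst ha0
    have hz : ∀ s ∈ Set.Ioi (0:ℝ), ENNReal.ofReal (s ^ (q-2) * max (|(0:ℝ)| - s) 0) = 0 := by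
      intro s hs
      have hmx : max (|(0:ℝ)| - s) 0 = 0 := max_eq_right (by
        simp only [abs_zero, zero_sub]; linarith [mem_Ioi.1 hs])
      rw [hmx, mul_zero]; simp
    rw [MeasureTheory.setLIntegral_congr_fun measurableSet_Ioi hz]
    simp [ENNReal.zero_rpow_of_pos hq0]
  · set A := |a| with hAdef
    have hIoi0 : ∫⁻ s in Set.Ioi A, ENNReal.ofReal (s ^ (q-2) * max (A - s) 0) = 0 := by
      have hz : ∀ s ∈ Set.Ioi A, ENNReal.ofReal (s ^ (q-2) * max (A - s) 0) = 0 := by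
        intro s hs
        have hmx : max (A - s) 0 = 0 := max_eq_right (by linarith [mem_Ioi.1 hs])
        rw [hmx, mul_zero]; simp
      rw [MeasureTheory.setLIntegral_congr_fun measurableSet_Ioi hz]
      simp
    have hii1 : IntervalIntegrable (fun s : ℝ => s ^ (q-2)) volume 0 A :=
      intervalIntegral.intervalIntegrable_rpow' (by linarith)
    have hii2 : IntervalIntegrable (fun s : ℝ => s ^ (q-1)) volume 0 A :=
      intervalIntegral.intervalIntegrable_rpow' (by linarith)
    have hii : IntervalIntegrable (fun s : ℝ => A * s ^ (q-2) - s ^ (q-1)) volume 0 A :=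
      (hii1.const_mul A).sub hii2
    have hIntOn : MeasureTheory.IntegrableOn (fun s : ℝ => A * s ^ (q-2) - s ^ (q-1))
        (Set.Ioc 0 A) volume := hii.1
    have hpt : ∀ s ∈ Set.Ioc (0:ℝ) A,
        ENNReal.ofReal (s ^ (q-2) * max (A - s) 0)
          = ENNReal.ofReal (A * s ^ (q-2) - s ^ (q-1)) := by
      intro s hs
      have hs0 : 0 < s := hs.1
      have hsA : s ≤ A := hs.2
      have hmax : max (A - s) 0 = A - s := max_eq_left (by linarith)
      have hpow : s ^ (q-1) = s ^ (q-2) * s := by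
        rw [show q - 1 = (q-2) + 1 by ring, Real.rpow_add hs0, Real.rpow_one]
      rw [hmax]
      congr 1
      rw [hpow]; ring
    have hnn : 0 ≤ᵐ[volume.restrict (Set.Ioc 0 A)] fun s : ℝ => A * s ^ (q-2) - s ^ (q-1) := by
      have hnn' : ∀ᵐ s ∂(volume.restrict (Set.Ioc (0:ℝ) A)), 0 ≤ A * s ^ (q-2) - s ^ (q-1) := by
        rw [MeasureTheory.ae_restrict_iff' measurableSet_Ioc]
        filter_upwards with s hs
        have hs0 : 0 < s := hs.1
        have hsA : s ≤ A := hs.2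
        have hpow : s ^ (q-1) = s ^ (q-2) * s := by
          rw [show q - 1 = (q-2) + 1 by ring, Real.rpow_add hs0, Real.rpow_one]
        have hnn2 : (0:ℝ) ≤ s ^ (q-2) := Real.rpow_nonneg (le_of_lt hs0) _
        rw [hpow]
        nlinarith
      exact hnn'
    have hIoc : ∫⁻ s in Set.Ioc (0:ℝ) A, ENNReal.ofReal (s ^ (q-2) * max (A - s) 0)
        = ENNReal.ofReal (∫ s in Set.Ioc (0:ℝ) A, (A * s ^ (q-2) - s ^ (q-1))) := by
      rw [MeasureTheory.setLIntegral_congr_fun measurableSet_Ioc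
        hpt]
      rw [← MeasureTheory.ofReal_integral_eq_lintegral_ofReal hIntOn hnn]
    have hval : ∫ s in Set.Ioc (0:ℝ) A, (A * s ^ (q-2) - s ^ (q-1)) = A ^ q / (q * (q-1)) := by
      rw [← intervalIntegral.integral_of_le (le_of_lt hA)]
      rw [intervalIntegral.integral_sub (hii1.const_mul A) hii2]
      rw [intervalIntegral.integral_const_mul]
      rw [integral_rpow (Or.inl (by linarith)), integral_rpow (Or.inl (by linarith))]
      rw [show q - 2 + 1 = q - 1 by ring, show q - 1 + 1 = q by ring]
      rw [Real.zero_rpow (by intro hcon; exact absurd hcon (by linarith) : q - 1 ≠ 0),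
        Real.zero_rpow (by intro hcon; exact absurd hcon (by linarith) : q ≠ 0)]
      have hAq : A * A ^ (q-1) = A ^ q := by
        rw [show A * A ^ (q-1) = A ^ (1:ℝ) * A ^ (q-1) by rw [Real.rpow_one],
          ← Real.rpow_add hA, show (1:ℝ) + (q-1) = q by ring]
      rw [sub_zero, sub_zero]
      rw [show A * (A ^ (q-1) / (q-1)) = (A * A ^ (q-1)) / (q-1) by ring, hAq]
      have hne1 : q - 1 ≠ 0 := by linarith
      have hne2 : q ≠ 0 := by linarith
      rw [div_sub_div _ _ hne1 hne2, div_eq_div_iff (mul_ne_zero hne1 hne2) (mul_ne_zero hne2 hne1)]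
      ring
    have hsplitset : Set.Ioi (0:ℝ) = Set.Ioc 0 A ∪ Set.Ioi A :=
      (Ioc_union_Ioi_eq_Ioi (le_of_lt hA)).symm
    rw [hsplitset, MeasureTheory.lintegral_union measurableSet_Ioi (Ioc_disjoint_Ioi le_rfl),
      hIoi0, add_zero, hIoc, hval]
    rw [← ENNReal.ofReal_mul (by nlinarith : (0:ℝ) ≤ q * (q-1))]
    rw [mul_div_cancel₀ _ (by nlinarith : q * (q-1) ≠ 0)]
    rw [← enorm_eq_nnnorm, Real.enorm_eq_ofReal_abs, ← hAdef,
      ENNReal.ofReal_rpow_of_nonneg (by rw [hAdef]; exact abs_nonneg a) (le_of_lt hq0)]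

lemma layer_rep {q : ℝ} (hq : 1 < q) {u : ℝ → ℝ} (hum : Measurable u) :
    ∫⁻ w, (‖u w‖₊ : ENNReal) ^ q ∂μ01
      = ENNReal.ofReal (q*(q-1)) *
        ∫⁻ s in Set.Ioi (0:ℝ),
          (ENNReal.ofReal (s ^ (q-2)) * ∫⁻ w, ENNReal.ofReal (max (|u w| - s) 0) ∂μ01) := by
  have h1 : ∫⁻ w, (‖u w‖₊ : ENNReal) ^ q ∂μ01
      = ∫⁻ w, (ENNReal.ofReal (q*(q-1)) *
          ∫⁻ s in Set.Ioi (0:ℝ), ENNReal.ofReal (s ^ (q-2) * max (|u w| - s) 0)) ∂μ01 :=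
    MeasureTheory.lintegral_congr fun w => layer_pt hq (u w)
  rw [h1, MeasureTheory.lintegral_const_mul' _ _ ENNReal.ofReal_ne_top]
  congr 1
  have m1 : Measurable fun p : ℝ × ℝ => p.2 ^ (q-2) := by measurability
  have m2 : Measurable fun p : ℝ × ℝ => max (|u p.1| - p.2) 0 :=
    ((hum.comp measurable_fst).abs.sub measurable_snd).max measurable_const
  have hmeas : AEMeasurable (Function.uncurry fun (w s : ℝ) =>
      ENNReal.ofReal (s ^ (q-2) * max (|u w| - s) 0))
      (μ01.prod (volume.restrict (Set.Ioi (0:ℝ)))) :=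
    (ENNReal.measurable_ofReal.comp (m1.mul m2)).aemeasurable
  rw [MeasureTheory.lintegral_lintegral_swap hmeas]
  apply MeasureTheory.setLIntegral_congr_fun measurableSet_Ioi
  intro s hs
  beta_reduce
  have hs0 : (0:ℝ) < s := hs
  have hrw : ∀ w, ENNReal.ofReal (s ^ (q-2) * max (|u w| - s) 0)
      = ENNReal.ofReal (s ^ (q-2)) * ENNReal.ofReal (max (|u w| - s) 0) := fun w =>
    ENNReal.ofReal_mul (Real.rpow_nonneg (le_of_lt hs0) _)
  rw [MeasureTheory.lintegral_congr hrw,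
    MeasureTheory.lintegral_const_mul' _ _ ENNReal.ofReal_ne_top]

lemma contraction {u v : ℝ → ℝ} (hum : Measurable u) (hvm : Measurable v)
    (hu : MeasureTheory.Integrable u μ01) (hv : MeasureTheory.Integrable v μ01)
    (habs : ∀ c : ℝ, 0 ≤ c → ∫ w, max (|u w| - c) 0 ∂μ01 ≤ ∫ w, max (|v w| - c) 0 ∂μ01)
    {p : ENNReal} (hp : 1 ≤ p) :
    MeasureTheory.eLpNorm u p μ01 ≤ MeasureTheory.eLpNorm v p μ01 := by
  rcases eq_or_ne p ⊤ with hptop | hptop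
  · subst hptop
    rw [MeasureTheory.eLpNorm_exponent_top, MeasureTheory.eLpNorm_exponent_top]
    rcases eq_or_ne (MeasureTheory.eLpNormEssSup v μ01) ⊤ with hM | hM
    · rw [hM]; exact le_top
    · set M := (MeasureTheory.eLpNormEssSup v μ01).toReal with hMdef
      have hMnn : 0 ≤ M := ENNReal.toReal_nonneg
      have hMv : ∀ᵐ w ∂μ01, |v w| ≤ M := by
        filter_upwards [MeasureTheory.ae_le_eLpNormEssSup (f := v) (μ := μ01)] with w hw
        have h2 := ENNReal.toReal_mono hM hw
        rw [toReal_enorm, Real.norm_eq_abs] at h2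
        exact h2
      have hstep : ∀ n : ℕ, ∀ᵐ w ∂μ01, |u w| ≤ M + 1/((n:ℝ)+1) := by
        intro n
        have hcn : (0:ℝ) ≤ M + 1/((n:ℝ)+1) := by positivity
        have h0 : ∫ w, max (|v w| - (M + 1/((n:ℝ)+1))) 0 ∂μ01 = 0 := by
          have hz : (fun w => max (|v w| - (M + 1/((n:ℝ)+1))) 0) =ᵐ[μ01] fun _ => (0:ℝ) := by
            filter_upwards [hMv] with w hw
            apply max_eq_right
            have : (0:ℝ) < 1/((n:ℝ)+1) := by positivity
            linarith
          rw [MeasureTheory.integral_congr_ae hz, MeasureTheory.integral_zero]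
        have h1 : ∫ w, max (|u w| - (M + 1/((n:ℝ)+1))) 0 ∂μ01 ≤ 0 :=
          (habs _ hcn).trans (le_of_eq h0)
        have h2 : ∫ w, max (|u w| - (M + 1/((n:ℝ)+1))) 0 ∂μ01 = 0 :=
          le_antisymm h1 (MeasureTheory.integral_nonneg fun w => le_max_right _ _)
        have h3 := (MeasureTheory.integral_eq_zero_iff_of_nonneg
          (fun w => le_max_right _ _) (int_max hu.abs hum.abs _ hcn)).1 h2
        filter_upwards [h3] with w hw
        have h4 : max (|u w| - (M + 1/((n:ℝ)+1))) 0 = 0 := hw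
        have h5 := le_max_left (|u w| - (M + 1/((n:ℝ)+1))) 0
        rw [h4] at h5
        linarith
      have hall : ∀ᵐ w ∂μ01, ∀ n : ℕ, |u w| ≤ M + 1/((n:ℝ)+1) :=
        (MeasureTheory.ae_all_iff).2 hstep
      have hfin : ∀ᵐ w ∂μ01, ‖u w‖ ≤ M := by
        filter_upwards [hall] with w hw
        rw [Real.norm_eq_abs]
        by_contra hcon
        push_neg at hcon
        obtain ⟨n, hn⟩ := exists_nat_one_div_lt (sub_pos.2 hcon)
        have := hw n
        linarith
      calc MeasureTheory.eLpNormEssSup u μ01 ≤ ENNReal.ofReal M :=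
            MeasureTheory.eLpNormEssSup_le_of_ae_bound hfin
        _ = MeasureTheory.eLpNormEssSup v μ01 := ENNReal.ofReal_toReal hM
  · have hp0 : p ≠ 0 := by
      intro h; rw [h] at hp; exact absurd hp (by simp)
    rcases eq_or_ne p 1 with hp1 | hp1
    · subst hp1
      rw [MeasureTheory.eLpNorm_one_eq_lintegral_enorm,
        MeasureTheory.eLpNorm_one_eq_lintegral_enorm,
        ← MeasureTheory.ofReal_integral_norm_eq_lintegral_enorm hu,
        ← MeasureTheory.ofReal_integral_norm_eq_lintegral_enorm hv]
      apply ENNReal.ofReal_le_ofReal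
      have h0 := habs 0 le_rfl
      simp only [sub_zero] at h0
      have hmu : (fun w => max |u w| 0) = fun w => ‖u w‖ := by
        funext w; rw [max_eq_left (abs_nonneg _), Real.norm_eq_abs]
      have hmv : (fun w => max |v w| 0) = fun w => ‖v w‖ := by
        funext w; rw [max_eq_left (abs_nonneg _), Real.norm_eq_abs]
      rw [hmu, hmv] at h0
      exact h0
    · have hq1 : 1 < p.toReal := by
        have hlt : 1 < p := lt_of_le_of_ne hp (Ne.symm hp1)
        have h2 := (ENNReal.toReal_lt_toReal (by simp : (1:ENNReal) ≠ ⊤) hptop).2 hlt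
        simpa using h2
      set q := p.toReal with hqdef
      have hA : ∀ s : ℝ, 0 ≤ s →
          (∫⁻ w, ENNReal.ofReal (max (|u w| - s) 0) ∂μ01)
            ≤ ∫⁻ w, ENNReal.ofReal (max (|v w| - s) 0) ∂μ01 := by
        intro s hs
        rw [← MeasureTheory.ofReal_integral_eq_lintegral_ofReal (int_max hu.abs hum.abs s hs)
            (Filter.Eventually.of_forall fun w => le_max_right _ _),
          ← MeasureTheory.ofReal_integral_eq_lintegral_ofReal (int_max hv.abs hvm.abs s hs)
            (Filter.Eventually.of_forall fun w => le_max_right _ _)]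
        exact ENNReal.ofReal_le_ofReal (habs s hs)
      have hle : ∫⁻ w, (‖u w‖₊ : ENNReal) ^ q ∂μ01 ≤ ∫⁻ w, (‖v w‖₊ : ENNReal) ^ q ∂μ01 := by
        rw [layer_rep hq1 hum, layer_rep hq1 hvm]
        apply mul_le_mul_right
        apply MeasureTheory.lintegral_mono_ae
        rw [MeasureTheory.ae_restrict_iff' measurableSet_Ioi]
        filter_upwards with s hs
        exact mul_le_mul_right (hA s (le_of_lt hs)) _
      rw [MeasureTheory.eLpNorm_eq_lintegral_rpow_enorm_toReal hp0 hptop,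
        MeasureTheory.eLpNorm_eq_lintegral_rpow_enorm_toReal hp0 hptop]
      exact ENNReal.rpow_le_rpow hle
        (le_of_lt (by rw [one_div]; exact inv_pos.2 (by linarith)))

theorem stmt17 (p : ENNReal) (hp : 1 ≤ p)
    (X₁ X₂ : ℝ → ℝ → ℝ) (X₀₁ X₀₂ V₀₁ V₀₂ : ℝ → ℝ)
    (hK₁ : X₀₁ ∈ coneK) (hK₂ : X₀₂ ∈ coneK)
    (hV₁ : MeasureTheory.MemLp V₀₁ 2 μ01) (hV₂ : MeasureTheory.MemLp V₀₂ 2 μ01)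
    (hXp₁ : MeasureTheory.MemLp X₀₁ p μ01) (hXp₂ : MeasureTheory.MemLp X₀₂ p μ01)
    (hVp₁ : MeasureTheory.MemLp V₀₁ p μ01) (hVp₂ : MeasureTheory.MemLp V₀₂ p μ01)
    (hflow₁ : ∀ t : ℝ, 0 ≤ t → IsProjK (fun w => X₀₁ w + t * V₀₁ w) (X₁ t))
    (hflow₂ : ∀ t : ℝ, 0 ≤ t → IsProjK (fun w => X₀₂ w + t * V₀₂ w) (X₂ t)) :
    ∀ t : ℝ, 0 ≤ t →
      MeasureTheory.eLpNorm (fun w => X₁ t w - X₂ t w) p μ01 ≤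
        MeasureTheory.eLpNorm (fun w => X₀₁ w - X₀₂ w) p μ01 +
          ENNReal.ofReal t * MeasureTheory.eLpNorm (fun w => V₀₁ w - V₀₂ w) p μ01 := by
  intro t ht
  have hproj₁ := hflow₁ t ht
  have hproj₂ := hflow₂ t ht
  have hf₁ : MeasureTheory.MemLp (fun w => X₀₁ w + t * V₀₁ w) 2 μ01 :=
    hK₁.2.add (hV₁.const_mul t)
  have hf₂ : MeasureTheory.MemLp (fun w => X₀₂ w + t * V₀₂ w) 2 μ01 :=
    hK₂.2.add (hV₂.const_mul t)
  have hg₁ : MeasureTheory.MemLp (X₁ t) 2 μ01 := hproj₁.1.2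
  have hg₂ : MeasureTheory.MemLp (X₂ t) 2 μ01 := hproj₂.1.2
  have huSM : MeasureTheory.AEStronglyMeasurable (fun w => X₁ t w - X₂ t w) μ01 :=
    hg₁.aestronglyMeasurable.sub hg₂.aestronglyMeasurable
  have hvSM : MeasureTheory.AEStronglyMeasurable
      (fun w => (X₀₁ w + t * V₀₁ w) - (X₀₂ w + t * V₀₂ w)) μ01 :=
    hf₁.aestronglyMeasurable.sub hf₂.aestronglyMeasurable
  set u' : ℝ → ℝ := huSM.mk _ with hu'def
  set v' : ℝ → ℝ := hvSM.mk _ with hv'def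
  have hueq : (fun w => X₁ t w - X₂ t w) =ᵐ[μ01] u' := huSM.ae_eq_mk
  have hveq : (fun w => (X₀₁ w + t * V₀₁ w) - (X₀₂ w + t * V₀₂ w)) =ᵐ[μ01] v' := hvSM.ae_eq_mk
  have hum : Measurable u' := huSM.stronglyMeasurable_mk.measurable
  have hvm : Measurable v' := hvSM.stronglyMeasurable_mk.measurable
  have hui : MeasureTheory.Integrable u' μ01 :=
    ((hg₁.sub hg₂).integrable one_le_two).congr hueq
  have hvi : MeasureTheory.Integrable v' μ01 :=
    ((hf₁.sub hf₂).integrable one_le_two).congr hveq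
  have key' : ∀ θ : ℝ → ℝ, Monotone θ → LipschitzWith 1 θ → (∀ x, |θ x| ≤ 1) →
      ∫ w, (u' w - v' w) * θ (u' w) ∂μ01 ≤ 0 := by
    intro θ hm hl hb
    have h0 := key_ineq hproj₁ hproj₂ hf₁ hf₂ hm hl hb
    have hcong : (fun w => (u' w - v' w) * θ (u' w)) =ᵐ[μ01]
        (fun w => ((X₁ t w - X₂ t w) - ((X₀₁ w + t * V₀₁ w) - (X₀₂ w + t * V₀₂ w)))
          * θ (X₁ t w - X₂ t w)) := by
      filter_upwards [hueq, hveq] with w h1 h2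
      rw [← h1, ← h2]
    rw [MeasureTheory.integral_congr_ae hcong]
    exact h0
  have habs : ∀ c : ℝ, 0 ≤ c →
      ∫ w, max (|u' w| - c) 0 ∂μ01 ≤ ∫ w, max (|v' w| - c) 0 ∂μ01 :=
    fun c hc => abs_part_ineq hum hvm hui hvi key' hc
  have hcon : MeasureTheory.eLpNorm u' p μ01 ≤ MeasureTheory.eLpNorm v' p μ01 :=
    contraction hum hvm hui hvi habs hp
  have htri : MeasureTheory.eLpNorm
        (fun w => (X₀₁ w + t * V₀₁ w) - (X₀₂ w + t * V₀₂ w)) p μ01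
      ≤ MeasureTheory.eLpNorm (fun w => X₀₁ w - X₀₂ w) p μ01 +
        ENNReal.ofReal t * MeasureTheory.eLpNorm (fun w => V₀₁ w - V₀₂ w) p μ01 := by
    have heq : (fun w => (X₀₁ w + t * V₀₁ w) - (X₀₂ w + t * V₀₂ w))
        = (fun w => X₀₁ w - X₀₂ w) + fun w => t * (V₀₁ w - V₀₂ w) := by
      funext w; simp only [Pi.add_apply]; ring
    rw [heq]
    refine le_trans (MeasureTheory.eLpNorm_add_le ((hXp₁.sub hXp₂).aestronglyMeasurable)
      (((hVp₁.sub hVp₂).const_mul t).aestronglyMeasurable) hp) ?_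
    have hsmul : (fun w => t * (V₀₁ w - V₀₂ w)) = t • (fun w => V₀₁ w - V₀₂ w) := rfl
    rw [hsmul, MeasureTheory.eLpNorm_const_smul, Real.enorm_eq_ofReal ht]
  calc MeasureTheory.eLpNorm (fun w => X₁ t w - X₂ t w) p μ01
      = MeasureTheory.eLpNorm u' p μ01 := MeasureTheory.eLpNorm_congr_ae hueq
    _ ≤ MeasureTheory.eLpNorm v' p μ01 := hcon
    _ = MeasureTheory.eLpNorm
        (fun w => (X₀₁ w + t * V₀₁ w) - (X₀₂ w + t * V₀₂ w)) p μ01 :=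
      (MeasureTheory.eLpNorm_congr_ae hveq).symm
    _ ≤ _ := htri
end
end

section
/- Let X(t) = Proj_K(X₀ + tV₀) be the Lagrangian sticky-particle flow with X₀ ∈ K and V₀ ∈ L²(0,1), and let ψ: ℝ → [0,+∞] be convex and lower semicontinuous. Then for any two initial data pairs, ∫₀¹ ψ(X¹(t) - X²(t)) dw ≤ ∫₀¹ ψ(X¹₀ - X²₀ + t(V¹₀ - V²₀)) dw for all t ≥ 0. -/
open MeasureTheory Set Filter

noncomputable section

/-- The Moreau-envelope candidate set. -/
def mSet (ψ : ℝ → ENNReal) (l x : ℝ) : Set ℝ :=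
  (fun y => (ψ y).toReal + (x - y)^2/(2*l)) '' {y | ψ y ≠ ⊤}

/-- The Moreau envelope of `ψ` with parameter `l`. -/
def mEnv (ψ : ℝ → ENNReal) (l x : ℝ) : ℝ := sInf (mSet ψ l x)

variable {ψ : ℝ → ENNReal} {l x y₀ : ℝ}

lemma mSet_nonempty (hy₀ : ψ y₀ ≠ ⊤) : (mSet ψ l x).Nonempty :=
  ⟨_, ⟨y₀, hy₀, rfl⟩⟩

lemma mSet_bddBelow (hl : 0 < l) : BddBelow (mSet ψ l x) := by
  refine ⟨0, fun r hr => ?_⟩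
  obtain ⟨y, -, rfl⟩ := hr
  positivity

lemma mEnv_nonneg (hl : 0 < l) : 0 ≤ mEnv ψ l x := by
  by_cases hne : (mSet ψ l x).Nonempty
  · exact le_csInf hne fun r hr => by obtain ⟨y, -, rfl⟩ := hr; positivity
  · simp [mEnv, Set.not_nonempty_iff_eq_empty.mp hne, Real.sInf_empty]

lemma mEnv_le (hl : 0 < l) {y : ℝ} (hy : ψ y ≠ ⊤) :
    mEnv ψ l x ≤ (ψ y).toReal + (x - y)^2/(2*l) :=
  csInf_le (mSet_bddBelow hl) ⟨y, hy, rfl⟩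

lemma mEnv_ofReal_le (hl : 0 < l) : ENNReal.ofReal (mEnv ψ l x) ≤ ψ x := by
  by_cases hx : ψ x = ⊤
  · simp [hx]
  · calc ENNReal.ofReal (mEnv ψ l x) ≤ ENNReal.ofReal ((ψ x).toReal) := by
          apply ENNReal.ofReal_le_ofReal
          simpa using mEnv_le (x := x) hl hx
      _ = ψ x := ENNReal.ofReal_toReal hx

lemma mEnv_anti (hy₀ : ψ y₀ ≠ ⊤) {l' : ℝ} (hl : 0 < l) (hll' : l ≤ l') :
    mEnv ψ l' x ≤ mEnv ψ l x := by
  have hl' : 0 < l' := lt_of_lt_of_le hl hll'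
  refine le_csInf (mSet_nonempty hy₀) fun r hr => ?_
  obtain ⟨y, hy, rfl⟩ := hr
  refine le_trans (mEnv_le hl' hy) ?_
  have h2 : (x - y)^2/(2*l') ≤ (x - y)^2/(2*l) :=
    div_le_div_of_nonneg_left (by positivity) (by positivity) (by linarith)
  linarith

lemma iSup_mEnv (hy₀ : ψ y₀ ≠ ⊤) (hψl : LowerSemicontinuous ψ)
    (hl0 : ∀ n : ℕ, (0:ℝ) < 1/(n+1)) :
    ∀ x : ℝ, (⨆ n : ℕ, ENNReal.ofReal (mEnv ψ (1/(n+1)) x)) = ψ x := by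
  intro x
  refine le_antisymm (iSup_le fun n => mEnv_ofReal_le (hl0 n)) ?_
  by_contra hcon
  push_neg at hcon
  set S := ⨆ n : ℕ, ENNReal.ofReal (mEnv ψ (1/(n+1)) x) with hS
  obtain ⟨c, hSc, hcx⟩ := exists_between hcon
  have hc_ne : c ≠ ⊤ := (hcx.trans_le le_top).ne
  -- lower semicontinuity: ψ > c near x
  have hev : ∀ᶠ z in nhds x, c < ψ z := hψl x c hcx
  obtain ⟨δ, hδ, hball⟩ := Metric.eventually_nhds_iff.mp hev
  -- choose n large
  obtain ⟨n, hn⟩ := exists_nat_gt ((2 * (c.toReal + 1)) / δ^2)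
  have hln : (0:ℝ) < 1/(n+1) := hl0 n
  have hkey : c.toReal ≤ mEnv ψ (1/(n+1)) x := by
    refine le_csInf (mSet_nonempty hy₀) fun r hr => ?_
    obtain ⟨y, hy, rfl⟩ := hr
    by_cases hnear : |x - y| < δ
    · have : c < ψ y := hball (by simpa [Real.dist_eq, abs_sub_comm] using hnear)
      have h1 : c.toReal ≤ (ψ y).toReal := ENNReal.toReal_mono hy this.le
      have h2 : (0:ℝ) ≤ (x - y)^2/(2*(1/(n+1))) := by positivity
      linarith
    · push_neg at hnear
      have hsq : δ^2 ≤ (x-y)^2 := by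
        have := sq_abs (x - y)
        nlinarith [abs_nonneg (x-y), hδ]
      have hinn1 : (0:ℝ) < (n:ℝ)+1 := by positivity
      have hn' : 2*(c.toReal+1) < δ^2 * n := by
        rw [div_lt_iff₀ (by positivity)] at hn; linarith
      have h1 : c.toReal + 1 ≤ (x - y)^2/(2*(1/(n+1))) := by
        have heq : (c.toReal + 1) * (2*(1/((n:ℝ)+1))) = 2*(c.toReal+1)/((n:ℝ)+1) := by
          ring
        rw [le_div_iff₀ (by positivity), heq, div_le_iff₀ hinn1]
        have h3 : δ^2*((n:ℝ)+1) ≤ (x-y)^2*((n:ℝ)+1) := by nlinarith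
        nlinarith [sq_nonneg δ]
      have h2 : (0:ℝ) ≤ (ψ y).toReal := ENNReal.toReal_nonneg
      linarith
  have : c ≤ S := by
    calc c = ENNReal.ofReal c.toReal := (ENNReal.ofReal_toReal hc_ne).symm
      _ ≤ ENNReal.ofReal (mEnv ψ (1/(n+1)) x) := ENNReal.ofReal_le_ofReal hkey
      _ ≤ S := le_iSup (fun n : ℕ => ENNReal.ofReal (mEnv ψ (1/(n+1)) x)) n
  exact absurd (lt_of_le_of_lt this hSc) (lt_irrefl c)
section Convexity

variable (hψc : ∀ x y θ : ℝ, 0 ≤ θ → θ ≤ 1 →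
      ψ (θ * x + (1 - θ) * y) ≤ ENNReal.ofReal θ * ψ x + ENNReal.ofReal (1 - θ) * ψ y)

include hψc in
/-- Convex combination within the effective domain. -/
lemma dom_combo {y₁ y₂ a b : ℝ} (hy₁ : ψ y₁ ≠ ⊤) (hy₂ : ψ y₂ ≠ ⊤) (ha : 0 ≤ a) (hb : 0 ≤ b)
    (hab : a + b = 1) :
    ψ (a * y₁ + b * y₂) ≠ ⊤ ∧
      (ψ (a * y₁ + b * y₂)).toReal ≤ a * (ψ y₁).toReal + b * (ψ y₂).toReal := by
  have hb' : b = 1 - a := by linarith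
  have h := hψc y₁ y₂ a ha (by linarith)
  rw [← hb'] at h
  have hRne : ENNReal.ofReal a * ψ y₁ + ENNReal.ofReal b * ψ y₂ ≠ ⊤ := by
    apply ENNReal.add_ne_top.mpr
    constructor <;> exact ENNReal.mul_ne_top ENNReal.ofReal_ne_top (by assumption)
  refine ⟨fun hT => hRne (eq_top_iff.mpr (hT ▸ h)), ?_⟩
  calc (ψ (a * y₁ + b * y₂)).toReal ≤ (ENNReal.ofReal a * ψ y₁ + ENNReal.ofReal b * ψ y₂).toReal :=
        ENNReal.toReal_mono hRne h
    _ = a * (ψ y₁).toReal + b * (ψ y₂).toReal := by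
        rw [ENNReal.toReal_add (ENNReal.mul_ne_top ENNReal.ofReal_ne_top hy₁)
          (ENNReal.mul_ne_top ENNReal.ofReal_ne_top hy₂), ENNReal.toReal_mul,
          ENNReal.toReal_mul, ENNReal.toReal_ofReal ha, ENNReal.toReal_ofReal hb]

include hψc in
lemma convexOn_mEnv (hl : 0 < l) (hy₀ : ψ y₀ ≠ ⊤) : ConvexOn ℝ Set.univ (mEnv ψ l) := by
  refine ⟨convex_univ, fun x₁ _ x₂ _ a b ha hb hab => ?_⟩
  simp only [smul_eq_mul]
  refine le_of_forall_pos_le_add fun ε hε => ?_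
  obtain ⟨r₁, hr₁mem, hr₁⟩ := Real.lt_sInf_add_pos (mSet_nonempty (x := x₁) hy₀ (l := l)) hε
  obtain ⟨r₂, hr₂mem, hr₂⟩ := Real.lt_sInf_add_pos (mSet_nonempty (x := x₂) hy₀ (l := l)) hε
  obtain ⟨y₁, hy₁, rfl⟩ := hr₁mem
  obtain ⟨y₂, hy₂, rfl⟩ := hr₂mem
  obtain ⟨hdom, htoReal⟩ := dom_combo hψc hy₁ hy₂ ha hb hab
  have hle := mEnv_le (x := a * x₁ + b * x₂) hl hdom
  have hsq : (a * x₁ + b * x₂ - (a * y₁ + b * y₂))^2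
      ≤ a * (x₁ - y₁)^2 + b * (x₂ - y₂)^2 := by
    nlinarith [sq_nonneg ((x₁ - y₁) - (x₂ - y₂)), mul_nonneg ha hb, hab]
  have hdiv : (a * x₁ + b * x₂ - (a * y₁ + b * y₂))^2/(2*l)
      ≤ a * ((x₁ - y₁)^2/(2*l)) + b * ((x₂ - y₂)^2/(2*l)) := by
    have h2l : (0:ℝ) < 2*l := by positivity
    rw [div_le_iff₀ h2l]
    have heq : (a * ((x₁ - y₁)^2/(2*l)) + b * ((x₂ - y₂)^2/(2*l))) * (2*l)
        = a*(x₁-y₁)^2 + b*(x₂-y₂)^2 := by field_simp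
    rw [heq]; exact hsq
  have e1 : (ψ y₁).toReal + (x₁ - y₁)^2/(2*l) < mEnv ψ l x₁ + ε := hr₁
  have e2 : (ψ y₂).toReal + (x₂ - y₂)^2/(2*l) < mEnv ψ l x₂ + ε := hr₂
  calc mEnv ψ l (a * x₁ + b * x₂)
      ≤ (ψ (a * y₁ + b * y₂)).toReal + (a * x₁ + b * x₂ - (a * y₁ + b * y₂))^2/(2*l) := hle
    _ ≤ a * ((ψ y₁).toReal + (x₁ - y₁)^2/(2*l)) + b * ((ψ y₂).toReal + (x₂ - y₂)^2/(2*l)) := by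
        nlinarith [htoReal, hdiv]
    _ ≤ a * (mEnv ψ l x₁ + ε) + b * (mEnv ψ l x₂ + ε) := by
        have t1 := mul_le_mul_of_nonneg_left e1.le ha
        have t2 := mul_le_mul_of_nonneg_left e2.le hb
        linarith
    _ = a * mEnv ψ l x₁ + b * mEnv ψ l x₂ + ε := by nlinarith [hab]

/-- Semiconcavity companion: `x^2/(2l) - mEnv` is convex. -/
lemma convexOn_mK (hl : 0 < l) (hy₀ : ψ y₀ ≠ ⊤) :
    ConvexOn ℝ Set.univ (fun x => x^2/(2*l) - mEnv ψ l x) := by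
  refine ⟨convex_univ, fun x₁ _ x₂ _ a b ha hb hab => ?_⟩
  simp only [smul_eq_mul]
  have key : (a*x₁+b*x₂)^2/(2*l) - (a * (x₁^2/(2*l) - mEnv ψ l x₁) + b * (x₂^2/(2*l) - mEnv ψ l x₂))
      ≤ mEnv ψ l (a*x₁+b*x₂) := by
    refine le_csInf (mSet_nonempty hy₀) fun r hr => ?_
    obtain ⟨y, hy, rfl⟩ := hr
    have h1 : mEnv ψ l x₁ ≤ (ψ y).toReal + (x₁ - y)^2/(2*l) := mEnv_le hl hy
    have h2 : mEnv ψ l x₂ ≤ (ψ y).toReal + (x₂ - y)^2/(2*l) := mEnv_le hl hy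
    have hid : (a*x₁+b*x₂)^2 - a*x₁^2 - b*x₂^2 + a*(x₁-y)^2 + b*(x₂-y)^2 = (a*x₁+b*x₂ - y)^2 := by
      have hb' : b = 1 - a := by linarith
      subst hb'; ring
    have h1' := mul_le_mul_of_nonneg_left h1 ha
    have h2' := mul_le_mul_of_nonneg_left h2 hb
    have hl2 : (0:ℝ) < 2*l := by positivity
    rw [sub_le_iff_le_add]
    have expand : (a*x₁+b*x₂)^2/(2*l)
        = ((a*x₁+b*x₂ - y)^2 + a*x₁^2 + b*x₂^2 - a*(x₁-y)^2 - b*(x₂-y)^2)/(2*l) := by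
      rw [← hid]; ring_nf
    rw [expand]
    have hab1 : a + b = 1 := hab
    have : ((a*x₁+b*x₂ - y)^2 + a*x₁^2 + b*x₂^2 - a*(x₁-y)^2 - b*(x₂-y)^2)/(2*l)
        = (a*x₁+b*x₂ - y)^2/(2*l) + a*(x₁^2/(2*l)) + b*(x₂^2/(2*l))
          - a*((x₁-y)^2/(2*l)) - b*((x₂-y)^2/(2*l)) := by ring
    rw [this]
    have hpy : (0:ℝ) ≤ (ψ y).toReal := ENNReal.toReal_nonneg
    nlinarith [h1', h2']
  nlinarith [key]

end Convexity
section Slope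

variable {h : ℝ → ℝ}

/-- Left-slope supremum: a subgradient selection for a convex function. -/
def lSl (h : ℝ → ℝ) (a : ℝ) : ℝ := sSup ((fun u => (h a - h u)/(a - u)) '' Set.Iio a)

lemma slope_adj (hc : ConvexOn ℝ Set.univ h) {u a b : ℝ} (hua : u < a) (hab : a < b) :
    (h a - h u)/(a - u) ≤ (h b - h a)/(b - a) :=
  hc.slope_mono_adjacent (Set.mem_univ u) (Set.mem_univ b) hua hab

/-- Same-left-endpoint slope monotonicity. -/
lemma slope_left (hc : ConvexOn ℝ Set.univ h) {u a b : ℝ} (hua : u < a) (hab : a < b) :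
    (h a - h u)/(a - u) ≤ (h b - h u)/(b - u) := by
  have H := slope_adj hc hua hab
  rw [div_le_div_iff₀ (by linarith) (by linarith)] at H ⊢
  nlinarith [H]

lemma lSl_bddAbove (hc : ConvexOn ℝ Set.univ h) (a : ℝ) :
    BddAbove ((fun u => (h a - h u)/(a - u)) '' Set.Iio a) := by
  refine ⟨(h (a+1) - h a)/(a + 1 - a), fun r hr => ?_⟩
  obtain ⟨u, hu, rfl⟩ := hr
  exact slope_adj hc hu (by linarith)

lemma lSl_nonempty (a : ℝ) : ((fun u => (h a - h u)/(a - u)) '' Set.Iio a).Nonempty :=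
  ⟨_, ⟨a - 1, by simp, rfl⟩⟩

lemma slope_le_lSl (hc : ConvexOn ℝ Set.univ h) {u a : ℝ} (hua : u < a) :
    (h a - h u)/(a - u) ≤ lSl h a :=
  le_csSup (lSl_bddAbove hc a) ⟨u, hua, rfl⟩

lemma lSl_le_slope (hc : ConvexOn ℝ Set.univ h) {a b : ℝ} (hab : a < b) :
    lSl h a ≤ (h b - h a)/(b - a) := by
  refine csSup_le (lSl_nonempty a) fun r hr => ?_
  obtain ⟨u, hu, rfl⟩ := hr
  exact slope_adj hc hu hab

/-- Subgradient inequality for the left-slope selection. -/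
lemma lSl_subgrad (hc : ConvexOn ℝ Set.univ h) (a b : ℝ) :
    h a + lSl h a * (b - a) ≤ h b := by
  rcases lt_trichotomy a b with hab | rfl | hba
  · have := lSl_le_slope hc hab
    rw [le_div_iff₀ (by linarith)] at this
    linarith
  · simp
  · have := slope_le_lSl hc hba
    rw [div_le_iff₀ (by linarith)] at this
    nlinarith

lemma lSl_mono (hc : ConvexOn ℝ Set.univ h) : Monotone (lSl h) := by
  intro a b hab
  rcases eq_or_lt_of_le hab with rfl | hab'
  · exact le_refl _
  · exact le_trans (lSl_le_slope hc hab') (slope_le_lSl hc hab')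

/-- One-sided Lipschitz estimate for `lSl h` when `x²/(2l) - h` is convex. -/
lemma lSl_lip {l : ℝ} (hl : 0 < l) (hc : ConvexOn ℝ Set.univ h)
    (hk : ConvexOn ℝ Set.univ (fun x => x^2/(2*l) - h x)) {a b : ℝ} (hab : a ≤ b) :
    lSl h b ≤ lSl h a + (b - a)/l := by
  rcases eq_or_lt_of_le hab with rfl | hab
  · simp
  set k : ℝ → ℝ := fun x => x^2/(2*l) - h x with hkdef
  -- slope identity transfer: for x < y,
  have hid : ∀ x y : ℝ, x < y → (h y - h x)/(y - x) = (x+y)/(2*l) - (k y - k x)/(y - x) := by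
    intro x y hxy
    have hyx : y - x ≠ 0 := by linarith
    have h2l : (2*l) ≠ 0 := by positivity
    simp only [hkdef]
    field_simp
    ring
  refine csSup_le (lSl_nonempty b) fun r hr => ?_
  obtain ⟨u, hub, rfl⟩ := hr
  simp only []
  rcases lt_or_ge u a with hua | hau
  · -- u < a < b : share left endpoint, use slope_left for k
    have hK := slope_left hk hua hab
    have e1 := hid u a hua
    have e2 := hid u b (hua.trans hab)
    have hs : (h a - h u)/(a - u) ≤ lSl h a := slope_le_lSl hc hua
    have : (h b - h u)/(b - u) ≤ (h a - h u)/(a - u) + (b - a)/(2*l) := by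
      rw [e1, e2] at *
      have : (k b - k u)/(b - u) ≥ (k a - k u)/(a - u) := hK
      have harith : (u+b)/(2*l) - (u+a)/(2*l) = (b-a)/(2*l) := by ring
      linarith
    have h2 : (b - a)/(2*l) ≤ (b-a)/l := by
      rw [div_le_div_iff₀ (by positivity) hl]
      nlinarith [hab, hl]
    linarith
  · -- a ≤ u < b : compare disjoint k-slopes with v slightly below a
    refine le_of_forall_pos_le_add fun ε hε => ?_
    set v : ℝ := a - ε*l with hv
    have hva : v < a := by have : 0 < ε*l := by positivity
                           simp [hv]; linarith
    have hK : (k a - k v)/(a - v) ≤ (k b - k u)/(b - u) := by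
      rcases eq_or_lt_of_le hau with rfl | hau'
      · exact slope_adj hk hva hub
      · exact le_trans (slope_adj hk hva hau') (slope_adj hk hau' hub)
    have e1 := hid v a hva
    have e2 := hid u b hub
    have hs : (h a - h v)/(a - v) ≤ lSl h a := slope_le_lSl hc hva
    have hBound : (v+a)/(2*l) + (k a - k v)/(a - v) ≤ (v+a)/(2*l) + (k b - k u)/(b - u) := by
      linarith
    -- (h b - h u)/(b-u) = (u+b)/(2l) - slope_k(u,b) ≤ (u+b)/(2l) - slope_k(v,a)
    --   = (u+b)/(2l) - (v+a)/(2l) + slope_h(v,a)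
    have key : (h b - h u)/(b - u) ≤ (u + b - v - a)/(2*l) + (h a - h v)/(a - v) := by
      rw [e1, e2]
      have : (u + b - v - a)/(2*l) = (u+b)/(2*l) - (v+a)/(2*l) := by ring
      linarith
    have hgeom : (u + b - v - a)/(2*l) ≤ (b - a)/l + ε/2 := by
      rw [div_le_iff₀ (by positivity)]
      have : ((b-a)/l + ε/2) * (2*l) = 2*(b-a) + ε*l := by field_simp
      rw [this]
      have h1 : u < b := hub
      have h2 : v = a - ε*l := hv
      nlinarith [hε, hl]
    calc (h b - h u)/(b - u) ≤ (u + b - v - a)/(2*l) + (h a - h v)/(a - v) := key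
      _ ≤ (b - a)/l + ε/2 + lSl h a := by linarith
      _ ≤ lSl h a + (b - a)/l + ε := by linarith

end Slope
section MeasureFacts

variable {f g : ℝ → ℝ}

lemma memℒp_mul_integrable {μ : Measure ℝ} (hf : MemLp f 2 μ) (hg : MemLp g 2 μ) :
    Integrable (fun w => f w * g w) μ := by
  refine Integrable.mono' ((hf.integrable_sq.add hg.integrable_sq).div_const 2)
    (hf.aestronglyMeasurable.mul hg.aestronglyMeasurable) (ae_of_all _ fun w => ?_)
  have : ‖f w * g w‖ = |f w| * |g w| := abs_mul _ _
  rw [this]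
  simp only [Pi.add_apply]
  nlinarith [sq_nonneg (|f w| - |g w|), sq_abs (f w), sq_abs (g w), abs_nonneg (f w),
    abs_nonneg (g w)]

instance inst_s18 : IsFiniteMeasure μ01 := by
  constructor
  rw [μ01, Measure.restrict_apply_univ, Real.volume_Ioo]
  exact ENNReal.ofReal_lt_top

lemma setInt_eq (F : ℝ → ℝ) : (∫ w in Set.Ioo (0:ℝ) 1, F w) = ∫ w, F w ∂μ01 := rfl

lemma setLint_eq (F : ℝ → ENNReal) : (∫⁻ w in Set.Ioo (0:ℝ) 1, F w) = ∫⁻ w, F w ∂μ01 := rfl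

lemma projK_facts (hf : MemLp f 2 μ01) (hP : IsProjK f g) :
    (∫ w, (f w - g w) * g w ∂μ01) = 0 ∧
      ∀ z ∈ coneK, (∫ w, (f w - g w) * z w ∂μ01) ≤ 0 := by
  have hg2 : MemLp g 2 μ01 := hP.1.2
  have hξ : MemLp (fun w => f w - g w) 2 μ01 := hf.sub hg2
  have hzero : (0 : ℝ → ℝ) ∈ coneK := ⟨monotoneOn_const, memLp_const 0⟩
  have h2g : (fun w => 2 * g w) ∈ coneK := by
    refine ⟨fun w hw w' hw' hww' => ?_, hg2.const_mul 2⟩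
    have := hP.1.1 hw hw' hww'
    simp only []
    linarith
  have hVI0 := hP.2 0 hzero
  have hVI2 := hP.2 _ h2g
  rw [setInt_eq] at hVI0 hVI2
  have e0 : ∀ w, (f w - g w) * ((0:ℝ→ℝ) w - g w) = -((f w - g w) * g w) := fun w => by
    simp only [Pi.zero_apply]; ring
  have e2 : ∀ w, (f w - g w) * ((fun w => 2 * g w) w - g w) = (f w - g w) * g w := fun w => by
    simp only []; ring
  simp only [e0] at hVI0
  simp only [e2] at hVI2
  rw [integral_neg] at hVI0
  have hzero' : (∫ w, (f w - g w) * g w ∂μ01) = 0 := le_antisymm hVI2 (by linarith)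
  refine ⟨hzero', fun z hz => ?_⟩
  have hVIz := hP.2 z hz
  rw [setInt_eq] at hVIz
  have hintzg : Integrable (fun w => (f w - g w) * z w) μ01 := memℒp_mul_integrable hξ hz.2
  have hintgg : Integrable (fun w => (f w - g w) * g w) μ01 := memℒp_mul_integrable hξ hg2
  have esplit : ∀ w, (f w - g w) * (z w - g w)
      = (f w - g w) * z w - (f w - g w) * g w := fun w => by ring
  simp only [esplit] at hVIz
  rw [integral_sub hintzg hintgg, hzero'] at hVIz
  linarith

end MeasureFacts
section KeyStep

variable {ψ : ℝ → ENNReal} {l y₀ : ℝ}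

lemma key_step
    (hψc : ∀ x y θ : ℝ, 0 ≤ θ → θ ≤ 1 →
      ψ (θ * x + (1 - θ) * y) ≤ ENNReal.ofReal θ * ψ x + ENNReal.ofReal (1 - θ) * ψ y)
    (hy₀ : ψ y₀ ≠ ⊤) (hl : 0 < l)
    {f₁ f₂ g₁ g₂ : ℝ → ℝ} (hf₁ : MemLp f₁ 2 μ01) (hf₂ : MemLp f₂ 2 μ01)
    (hP₁ : IsProjK f₁ g₁) (hP₂ : IsProjK f₂ g₂) :
    (∫ w, mEnv ψ l (g₁ w - g₂ w) ∂μ01) ≤ ∫ w, mEnv ψ l (f₁ w - f₂ w) ∂μ01 := by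
  set h : ℝ → ℝ := mEnv ψ l with hdef
  have hconv : ConvexOn ℝ Set.univ h := convexOn_mEnv hψc hl hy₀
  have hkconv : ConvexOn ℝ Set.univ (fun x => x^2/(2*l) - h x) := convexOn_mK hl hy₀
  set s : ℝ → ℝ := lSl h with sdef
  have hs_mono : Monotone s := lSl_mono hconv
  have hs_lip : ∀ {a b : ℝ}, a ≤ b → s b ≤ s a + (b - a)/l := fun hab => lSl_lip hl hconv hkconv hab
  have hsub : ∀ a b : ℝ, h a + s a * (b - a) ≤ h b := lSl_subgrad hconv
  have hcont : Continuous h := by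
    have := hconv.continuousOn isOpen_univ
    rwa [continuousOn_univ] at this
  have hg₁2 : MemLp g₁ 2 μ01 := hP₁.1.2
  have hg₂2 : MemLp g₂ 2 μ01 := hP₂.1.2
  set G : ℝ → ℝ := fun w => g₁ w - g₂ w with Gdef
  set F : ℝ → ℝ := fun w => f₁ w - f₂ w with Fdef
  have hG2 : MemLp G 2 μ01 := hg₁2.sub hg₂2
  have hF2 : MemLp F 2 μ01 := hf₁.sub hf₂
  -- growth bound for s
  have habsl : ∀ x : ℝ, 0 ≤ |x|/l := fun x => by positivity
  have hgrow : ∀ x : ℝ, |s x| ≤ |s 0| + |x|/l := by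
    intro x
    rw [abs_le]
    rcases le_or_gt 0 x with hx | hx
    · have h1 : s x ≤ s 0 + (x - 0)/l := hs_lip hx
      have h2 : s 0 ≤ s x := hs_mono hx
      have hax : (x - 0)/l = |x|/l := by rw [abs_of_nonneg hx]; ring
      exact ⟨by linarith [neg_abs_le (s 0), habsl x], by linarith [le_abs_self (s 0)]⟩
    · have h1 : s 0 ≤ s x + (0 - x)/l := hs_lip hx.le
      have h2 : s x ≤ s 0 := hs_mono hx.le
      have hax : (0 - x)/l = |x|/l := by rw [abs_of_neg hx]; ring
      exact ⟨by linarith [neg_abs_le (s 0)], by linarith [le_abs_self (s 0), habsl x]⟩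
  -- measurability of s ∘ G
  have hGaesm : AEStronglyMeasurable G μ01 := hG2.aestronglyMeasurable
  have hsG_aesm : AEStronglyMeasurable (fun w => s (G w)) μ01 := by
    have hmk : Measurable (hGaesm.mk G) := hGaesm.stronglyMeasurable_mk.measurable
    have : AEStronglyMeasurable (fun w => s (hGaesm.mk G w)) μ01 :=
      (hs_mono.measurable.comp hmk).aestronglyMeasurable
    refine this.congr ?_
    filter_upwards [hGaesm.ae_eq_mk] with w hw
    rw [hw]
  -- s ∘ G is in L²
  have hsG2 : MemLp (fun w => s (G w)) 2 μ01 := by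
    have hbound : MemLp (fun w => |s 0| + (1/l) * ‖G w‖) 2 μ01 := by
      have hc : MemLp (fun _ : ℝ => |s 0|) 2 μ01 := memLp_const _
      have hn : MemLp (fun w => (1/l) * ‖G w‖) 2 μ01 := (hG2.norm).const_mul (1/l)
      exact hc.add hn
    refine MemLp.of_le hbound hsG_aesm (ae_of_all _ fun w => ?_)
    have h1 := hgrow (G w)
    have h2 : |G w|/l = (1/l) * ‖G w‖ := by rw [Real.norm_eq_abs]; ring
    have h3 : |s 0| + (1/l) * ‖G w‖ ≤ ‖|s 0| + (1/l) * ‖G w‖‖ := le_abs_self _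
    rw [Real.norm_eq_abs]
    linarith
  -- the two monotone test functions
  have hz₁K : (fun w => (1/l) * g₁ w - s (G w)) ∈ coneK := by
    refine ⟨fun w hw w' hw' hww' => ?_, (hg₁2.const_mul (1/l)).sub hsG2⟩
    simp only []
    have hg1 : g₁ w ≤ g₁ w' := hP₁.1.1 hw hw' hww'
    have hg2 : g₂ w ≤ g₂ w' := hP₂.1.1 hw hw' hww'
    have hAC : G w ≤ g₁ w' - g₂ w := by simp only [Gdef]; linarith
    have hBC : G w' ≤ g₁ w' - g₂ w := by simp only [Gdef]; linarith
    have h1 : s (G w') ≤ s (g₁ w' - g₂ w) := hs_mono hBC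
    have h2 : s (g₁ w' - g₂ w) ≤ s (G w) + ((g₁ w' - g₂ w) - G w)/l := hs_lip hAC
    have h3 : ((g₁ w' - g₂ w) - G w)/l = (1/l) * (g₁ w' - g₁ w) := by
      simp only [Gdef]; ring
    nlinarith [h1, h2]
  have hz₂K : (fun w => (1/l) * g₂ w + s (G w)) ∈ coneK := by
    refine ⟨fun w hw w' hw' hww' => ?_, (hg₂2.const_mul (1/l)).add hsG2⟩
    simp only []
    have hg1 : g₁ w ≤ g₁ w' := hP₁.1.1 hw hw' hww'
    have hg2 : g₂ w ≤ g₂ w' := hP₂.1.1 hw hw' hww'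
    have hDA : g₁ w - g₂ w' ≤ G w := by simp only [Gdef]; linarith
    have hDB : g₁ w - g₂ w' ≤ G w' := by simp only [Gdef]; linarith
    have h1 : s (G w) ≤ s (g₁ w - g₂ w') + (G w - (g₁ w - g₂ w'))/l := hs_lip hDA
    have h2 : s (g₁ w - g₂ w') ≤ s (G w') := hs_mono hDB
    have h3 : (G w - (g₁ w - g₂ w'))/l = (1/l) * (g₂ w' - g₂ w) := by
      simp only [Gdef]; ring
    nlinarith [h1, h2]
  -- variational inequalities
  obtain ⟨hv₁0, hv₁⟩ := projK_facts hf₁ hP₁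
  obtain ⟨hv₂0, hv₂⟩ := projK_facts hf₂ hP₂
  have hξ₁2 : MemLp (fun w => f₁ w - g₁ w) 2 μ01 := hf₁.sub hg₁2
  have hξ₂2 : MemLp (fun w => f₂ w - g₂ w) 2 μ01 := hf₂.sub hg₂2
  have hint₁g : Integrable (fun w => (f₁ w - g₁ w) * g₁ w) μ01 := memℒp_mul_integrable hξ₁2 hg₁2
  have hint₂g : Integrable (fun w => (f₂ w - g₂ w) * g₂ w) μ01 := memℒp_mul_integrable hξ₂2 hg₂2
  have hint₁s : Integrable (fun w => (f₁ w - g₁ w) * s (G w)) μ01 := memℒp_mul_integrable hξ₁2 hsG2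
  have hint₂s : Integrable (fun w => (f₂ w - g₂ w) * s (G w)) μ01 := memℒp_mul_integrable hξ₂2 hsG2
  -- ∫ ξ₁ sG ≥ 0
  have hpos₁ : 0 ≤ ∫ w, (f₁ w - g₁ w) * s (G w) ∂μ01 := by
    have hVz := hv₁ _ hz₁K
    have esplit : ∀ w, (f₁ w - g₁ w) * ((fun w => (1/l) * g₁ w - s (G w)) w)
        = (1/l) * ((f₁ w - g₁ w) * g₁ w) - (f₁ w - g₁ w) * s (G w) := fun w => by
      simp only []; ring
    simp only [esplit] at hVz
    rw [integral_sub ((hint₁g.const_mul (1/l))) hint₁s, integral_const_mul, hv₁0] at hVz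
    simpa using hVz
  -- ∫ ξ₂ sG ≤ 0
  have hneg₂ : (∫ w, (f₂ w - g₂ w) * s (G w) ∂μ01) ≤ 0 := by
    have hVz := hv₂ _ hz₂K
    have esplit : ∀ w, (f₂ w - g₂ w) * ((fun w => (1/l) * g₂ w + s (G w)) w)
        = (1/l) * ((f₂ w - g₂ w) * g₂ w) + (f₂ w - g₂ w) * s (G w) := fun w => by
      simp only []; ring
    simp only [esplit] at hVz
    rw [integral_add ((hint₂g.const_mul (1/l))) hint₂s, integral_const_mul, hv₂0] at hVz
    simpa using hVz
  -- integrability of h ∘ G, h ∘ F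
  have hHbound : ∀ (u : ℝ → ℝ), MemLp u 2 μ01 → Integrable (fun w => h (u w)) μ01 := by
    intro u hu
    have haesm : AEStronglyMeasurable (fun w => h (u w)) μ01 :=
      hcont.comp_aestronglyMeasurable hu.aestronglyMeasurable
    have hbint : Integrable (fun w => (ψ y₀).toReal + (u w - y₀)^2/(2*l)) μ01 := by
      refine (integrable_const _).add ?_
      exact ((hu.sub (memLp_const y₀)).integrable_sq).div_const (2*l)
    refine Integrable.mono' hbint haesm (ae_of_all _ fun w => ?_)
    rw [Real.norm_eq_abs, abs_of_nonneg (mEnv_nonneg hl)]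
    exact mEnv_le hl hy₀
  have hintG : Integrable (fun w => h (G w)) μ01 := hHbound G hG2
  have hintF : Integrable (fun w => h (F w)) μ01 := hHbound F hF2
  -- integrability of s(G)*(F-G)
  have hintsFG : Integrable (fun w => s (G w) * (F w - G w)) μ01 :=
    memℒp_mul_integrable hsG2 (hF2.sub hG2)
  -- the subgradient step
  have hptwise : ∀ w, h (G w) + s (G w) * (F w - G w) ≤ h (F w) := fun w => hsub (G w) (F w)
  have hmain : (∫ w, h (G w) ∂μ01) + (∫ w, s (G w) * (F w - G w) ∂μ01)
      ≤ ∫ w, h (F w) ∂μ01 := by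
    rw [← integral_add hintG hintsFG]
    exact integral_mono (hintG.add hintsFG) hintF hptwise
  -- positivity of the cross term
  have hcross : 0 ≤ ∫ w, s (G w) * (F w - G w) ∂μ01 := by
    have esplit : ∀ w, s (G w) * (F w - G w)
        = (f₁ w - g₁ w) * s (G w) - (f₂ w - g₂ w) * s (G w) := fun w => by
      simp only [Gdef, Fdef]; ring
    simp only [esplit]
    rw [integral_sub hint₁s hint₂s]
    linarith
  linarith

end KeyStep
section Final

variable {ψ : ℝ → ENNReal} {l y₀ : ℝ}

lemma key_lint
    (hψc : ∀ x y θ : ℝ, 0 ≤ θ → θ ≤ 1 →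
      ψ (θ * x + (1 - θ) * y) ≤ ENNReal.ofReal θ * ψ x + ENNReal.ofReal (1 - θ) * ψ y)
    (hy₀ : ψ y₀ ≠ ⊤) (hl : 0 < l)
    {f₁ f₂ g₁ g₂ : ℝ → ℝ} (hf₁ : MemLp f₁ 2 μ01) (hf₂ : MemLp f₂ 2 μ01)
    (hP₁ : IsProjK f₁ g₁) (hP₂ : IsProjK f₂ g₂) :
    (∫⁻ w, ENNReal.ofReal (mEnv ψ l (g₁ w - g₂ w)) ∂μ01) ≤ ∫⁻ w, ψ (f₁ w - f₂ w) ∂μ01 := by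
  have hconv : ConvexOn ℝ Set.univ (mEnv ψ l) := convexOn_mEnv hψc hl hy₀
  have hcont : Continuous (mEnv ψ l) := by
    have := hconv.continuousOn isOpen_univ
    rwa [continuousOn_univ] at this
  have hg₁2 : MemLp g₁ 2 μ01 := hP₁.1.2
  have hg₂2 : MemLp g₂ 2 μ01 := hP₂.1.2
  have hG2 : MemLp (fun w => g₁ w - g₂ w) 2 μ01 := hg₁2.sub hg₂2
  have hF2 : MemLp (fun w => f₁ w - f₂ w) 2 μ01 := hf₁.sub hf₂
  have hHbound : ∀ (u : ℝ → ℝ), MemLp u 2 μ01 → Integrable (fun w => mEnv ψ l (u w)) μ01 := by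
    intro u hu
    have haesm : AEStronglyMeasurable (fun w => mEnv ψ l (u w)) μ01 :=
      hcont.comp_aestronglyMeasurable hu.aestronglyMeasurable
    have hbint : Integrable (fun w => (ψ y₀).toReal + (u w - y₀)^2/(2*l)) μ01 :=
      (integrable_const _).add (((hu.sub (memLp_const y₀)).integrable_sq).div_const (2*l))
    refine Integrable.mono' hbint haesm (ae_of_all _ fun w => ?_)
    rw [Real.norm_eq_abs, abs_of_nonneg (mEnv_nonneg hl)]
    exact mEnv_le hl hy₀
  calc (∫⁻ w, ENNReal.ofReal (mEnv ψ l (g₁ w - g₂ w)) ∂μ01)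
      = ENNReal.ofReal (∫ w, mEnv ψ l (g₁ w - g₂ w) ∂μ01) :=
        (ofReal_integral_eq_lintegral_ofReal (hHbound _ hG2)
          (ae_of_all _ fun w => mEnv_nonneg hl)).symm
    _ ≤ ENNReal.ofReal (∫ w, mEnv ψ l (f₁ w - f₂ w) ∂μ01) :=
        ENNReal.ofReal_le_ofReal (key_step hψc hy₀ hl hf₁ hf₂ hP₁ hP₂)
    _ = ∫⁻ w, ENNReal.ofReal (mEnv ψ l (f₁ w - f₂ w)) ∂μ01 :=
        ofReal_integral_eq_lintegral_ofReal (hHbound _ hF2)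
          (ae_of_all _ fun w => mEnv_nonneg hl)
    _ ≤ ∫⁻ w, ψ (f₁ w - f₂ w) ∂μ01 := lintegral_mono fun w => mEnv_ofReal_le hl

end Final


theorem stmt18 (ψ : ℝ → ENNReal)
    (hψc : ∀ x y θ : ℝ, 0 ≤ θ → θ ≤ 1 →
      ψ (θ * x + (1 - θ) * y) ≤ ENNReal.ofReal θ * ψ x + ENNReal.ofReal (1 - θ) * ψ y)
    (hψl : LowerSemicontinuous ψ)
    (X₁ X₂ : ℝ → ℝ → ℝ) (X₀₁ X₀₂ V₀₁ V₀₂ : ℝ → ℝ)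
    (hK₁ : X₀₁ ∈ coneK) (hK₂ : X₀₂ ∈ coneK)
    (hV₁ : MeasureTheory.MemLp V₀₁ 2 μ01) (hV₂ : MeasureTheory.MemLp V₀₂ 2 μ01)
    (hflow₁ : ∀ t : ℝ, 0 ≤ t → IsProjK (fun w => X₀₁ w + t * V₀₁ w) (X₁ t))
    (hflow₂ : ∀ t : ℝ, 0 ≤ t → IsProjK (fun w => X₀₂ w + t * V₀₂ w) (X₂ t)) :
    ∀ t : ℝ, 0 ≤ t →
      (∫⁻ w in Set.Ioo (0:ℝ) 1, ψ (X₁ t w - X₂ t w)) ≤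
        ∫⁻ w in Set.Ioo (0:ℝ) 1, ψ (X₀₁ w - X₀₂ w + t * (V₀₁ w - V₀₂ w)) := by
  intro t ht
  rw [setLint_eq, setLint_eq]
  set f₁ : ℝ → ℝ := fun w => X₀₁ w + t * V₀₁ w with hf₁def
  set f₂ : ℝ → ℝ := fun w => X₀₂ w + t * V₀₂ w with hf₂def
  have hFeq : ∀ w, X₀₁ w - X₀₂ w + t * (V₀₁ w - V₀₂ w) = f₁ w - f₂ w := fun w => by
    simp only [hf₁def, hf₂def]; ring
  simp only [hFeq]
  by_cases hex : ∃ y₀, ψ y₀ ≠ ⊤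
  · obtain ⟨y₀, hy₀⟩ := hex
    have hP₁ := hflow₁ t ht
    have hP₂ := hflow₂ t ht
    have hf₁ : MemLp f₁ 2 μ01 := hK₁.2.add (hV₁.const_mul t)
    have hf₂ : MemLp f₂ 2 μ01 := hK₂.2.add (hV₂.const_mul t)
    have hg₁2 : MemLp (X₁ t) 2 μ01 := hP₁.1.2
    have hg₂2 : MemLp (X₂ t) 2 μ01 := hP₂.1.2
    have hG2 : MemLp (fun w => X₁ t w - X₂ t w) 2 μ01 := hg₁2.sub hg₂2
    have hl0 : ∀ n : ℕ, (0:ℝ) < 1/(n+1) := fun n => by positivity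
    -- monotone convergence on the left
    have hsup : ∀ x : ℝ, (⨆ n : ℕ, ENNReal.ofReal (mEnv ψ (1/(n+1)) x)) = ψ x :=
      iSup_mEnv hy₀ hψl hl0
    have hmeas : ∀ n : ℕ, AEMeasurable
        (fun w => ENNReal.ofReal (mEnv ψ (1/(n+1)) (X₁ t w - X₂ t w))) μ01 := by
      intro n
      have hconv : ConvexOn ℝ Set.univ (mEnv ψ (1/(n+1))) := convexOn_mEnv hψc (hl0 n) hy₀
      have hcont : Continuous (mEnv ψ (1/(n+1))) := by
        have := hconv.continuousOn isOpen_univ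
        rwa [continuousOn_univ] at this
      exact ENNReal.measurable_ofReal.comp_aemeasurable
        ((hcont.comp_aestronglyMeasurable hG2.aestronglyMeasurable).aemeasurable)
    have hmono : ∀ᵐ w ∂μ01, Monotone
        (fun n : ℕ => ENNReal.ofReal (mEnv ψ (1/(n+1)) (X₁ t w - X₂ t w))) := by
      refine ae_of_all _ fun w => ?_
      intro n m hnm
      apply ENNReal.ofReal_le_ofReal
      refine mEnv_anti hy₀ (hl0 m) ?_
      have h1 : ((n:ℝ)+1) ≤ ((m:ℝ)+1) := by
        have : (n:ℝ) ≤ (m:ℝ) := Nat.cast_le.mpr hnm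
        linarith
      rw [div_le_div_iff₀ (by positivity) (by positivity)]
      linarith
    calc (∫⁻ w, ψ (X₁ t w - X₂ t w) ∂μ01)
        = ∫⁻ w, ⨆ n : ℕ, ENNReal.ofReal (mEnv ψ (1/(n+1)) (X₁ t w - X₂ t w)) ∂μ01 := by
          apply lintegral_congr
          intro w
          exact (hsup _).symm
      _ = ⨆ n : ℕ, ∫⁻ w, ENNReal.ofReal (mEnv ψ (1/(n+1)) (X₁ t w - X₂ t w)) ∂μ01 :=
          lintegral_iSup' hmeas hmono
      _ ≤ ∫⁻ w, ψ (f₁ w - f₂ w) ∂μ01 :=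
          iSup_le fun n => key_lint hψc hy₀ (hl0 n) hf₁ hf₂ hP₁ hP₂
  · push_neg at hex
    have : (∫⁻ w, ψ (f₁ w - f₂ w) ∂μ01) = ⊤ := by
      have : (∫⁻ w, ψ (f₁ w - f₂ w) ∂μ01) = ∫⁻ _, ⊤ ∂μ01 :=
        lintegral_congr fun w => hex _
      rw [this, lintegral_const]
      rw [μ01, Measure.restrict_apply_univ, Real.volume_Ioo]
      simp
    rw [this]
    exact le_top
end
end
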